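/- arXiv:2004.04087 — 5 statements merged into one kernel-verified Lean document; each statement's English description precedes it below -/
import Mathlib

section
/- Let g(s) = ∑_{n≥2} b_n n^{−s} be a Dirichlet series with finite abscissa of convergence which extends to a holomorphic function on ℂ_0 satisfying sup_{Re s > 0} (Re s)|g′(s)| < ∞. Then for every ε > 0 the function g is bounded on the half-plane ℂ_ε = {Re s > ε}; in particular the abscissa of regularity and boundedness of g satisfies σ_b ≤ 0. -/
/-- If a Dirichlet series `∑_{n≥2} b_n n^{−s}` converges absolutely on some
half-plane `ℂ_{σ₀}` and its sum extends to a holomorphic function `g` on `ℂ_0` with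
`sup_{Re s>0} (Re s)|g′(s)| ≤ B < ∞`, then `g` is bounded on every half-plane `ℂ_ε`, `ε > 0`;
in particular `σ_b(g) ≤ 0`. -/
theorem statement3 (b : ℕ → ℂ) (g : ℂ → ℂ) (B : ℝ)
    (hb : ∀ n, b n ≠ 0 → 2 ≤ n)
    (hconv : ∃ σ₀ : ℝ, ∀ s : ℂ, σ₀ < s.re →
      Summable (fun n : ℕ => ‖b n * (n : ℂ) ^ (-s)‖) ∧
        g s = ∑' n : ℕ, b n * (n : ℂ) ^ (-s))
    (hdiff : DifferentiableOn ℂ g {s : ℂ | 0 < s.re})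
    (hB : ∀ s : ℂ, 0 < s.re → s.re * ‖deriv g s‖ ≤ B) :
    ∀ ε : ℝ, 0 < ε → ∃ M : ℝ, ∀ s : ℂ, ε < s.re → ‖g s‖ ≤ M := by
  obtain ⟨σ₀, hσ₀⟩ := hconv
  intro ε hε
  set σ₁ : ℝ := σ₀ + 1 with hσ₁def
  set T : ℝ := max 0 (σ₁ - ε) with hTdef
  have hT0 : 0 ≤ T := le_max_left _ _
  have hTε : σ₁ ≤ ε + T := by
    have : σ₁ - ε ≤ T := le_max_right _ _
    linarith
  have hB0 : (0 : ℝ) ≤ B := by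
    have h1 := hB 1 (by norm_num)
    rw [Complex.one_re, one_mul] at h1
    exact le_trans (norm_nonneg _) h1
  have hopen : IsOpen {s : ℂ | 0 < s.re} :=
    isOpen_lt continuous_const Complex.continuous_re
  have hg_an : AnalyticOnNhd ℂ g {s : ℂ | 0 < s.re} :=
    hdiff.analyticOnNhd hopen
  have hderiv_cont : ContinuousOn (deriv g) {s : ℂ | 0 < s.re} :=
    hg_an.deriv.continuousOn
  -- summability at σ₁
  have hs₁ := hσ₀ (σ₁ : ℂ) (by simp [hσ₁def])
  set M₁ : ℝ := ∑' n : ℕ, ‖b n * (n : ℂ) ^ (-(σ₁ : ℂ))‖ with hM₁def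
  refine ⟨M₁ + B / ε * T, fun s hs => ?_⟩
  have hs0 : 0 < s.re := lt_trans hε hs
  -- bound at s + T
  have hsT : σ₀ < (s + (T : ℂ)).re := by
    simp only [Complex.add_re, Complex.ofReal_re]
    linarith
  obtain ⟨hsum, hgeq⟩ := hσ₀ (s + (T : ℂ)) hsT
  have hterm : ∀ n : ℕ, ‖b n * (n : ℂ) ^ (-(s + (T : ℂ)))‖ ≤
      ‖b n * (n : ℂ) ^ (-(σ₁ : ℂ))‖ := by
    intro n
    rcases eq_or_ne (b n) 0 with h0 | h0
    · simp [h0]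
    · have hn : 0 < n := lt_of_lt_of_le (by norm_num) (hb n h0)
      rw [norm_mul, norm_mul, Complex.norm_natCast_cpow_of_pos hn,
        Complex.norm_natCast_cpow_of_pos hn]
      refine mul_le_mul_of_nonneg_left ?_ (norm_nonneg _)
      apply Real.rpow_le_rpow_of_exponent_le (by exact_mod_cast hn)
      simp only [Complex.neg_re, Complex.add_re, Complex.ofReal_re]
      linarith
  have hgT : ‖g (s + (T : ℂ))‖ ≤ M₁ := by
    rw [hgeq]
    calc ‖∑' n : ℕ, b n * (n : ℂ) ^ (-(s + (T : ℂ)))‖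
        ≤ ∑' n : ℕ, ‖b n * (n : ℂ) ^ (-(s + (T : ℂ)))‖ :=
          norm_tsum_le_tsum_norm hsum
      _ ≤ M₁ := Summable.tsum_le_tsum hterm hsum hs₁.1
  -- FTC along horizontal segment
  have hmem : ∀ t : ℝ, 0 ≤ t → (s + (t : ℂ)) ∈ {s : ℂ | 0 < s.re} := by
    intro t ht
    simp only [Set.mem_setOf_eq, Complex.add_re, Complex.ofReal_re]
    linarith
  have hHD : ∀ t ∈ Set.uIcc (0 : ℝ) T,
      HasDerivAt (fun u : ℝ => g (s + (u : ℂ))) (deriv g (s + (t : ℂ))) t := by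
    intro t ht
    rw [Set.uIcc_of_le hT0] at ht
    have hmem' := hmem t ht.1
    have hgd : HasDerivAt g (deriv g (s + (t : ℂ))) (s + (t : ℂ)) :=
      (hdiff.differentiableAt (hopen.mem_nhds hmem')).hasDerivAt
    have hinner : HasDerivAt (fun z : ℂ => s + z) (1 : ℂ) (t : ℂ) := by
      simpa using (hasDerivAt_id ((t : ℝ) : ℂ)).const_add s
    have hcomp : HasDerivAt (fun z : ℂ => g (s + z)) (deriv g (s + (t : ℂ))) (t : ℂ) := by
      have h := hgd.comp ((t : ℝ) : ℂ) hinner; rw [mul_one] at h; exact h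
    exact hcomp.comp_ofReal
  have hcont : ContinuousOn (fun t : ℝ => deriv g (s + (t : ℂ)))
      (Set.uIcc (0 : ℝ) T) := by
    refine hderiv_cont.comp (Continuous.continuousOn (by continuity)) ?_
    intro t ht
    rw [Set.uIcc_of_le hT0] at ht
    exact hmem t ht.1
  have hint : IntervalIntegrable (fun t : ℝ => deriv g (s + (t : ℂ)))
      MeasureTheory.volume 0 T := hcont.intervalIntegrable
  have hftc := intervalIntegral.integral_eq_sub_of_hasDerivAt hHD hint
  have hgs : g s = g (s + (T : ℂ)) - ∫ t in (0 : ℝ)..T, deriv g (s + (t : ℂ)) := by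
    rw [hftc]
    simp
  have hintbound : ‖∫ t in (0 : ℝ)..T, deriv g (s + (t : ℂ))‖ ≤ B / ε * T := by
    have h := intervalIntegral.norm_integral_le_of_norm_le_const
      (C := B / ε) (f := fun t : ℝ => deriv g (s + (t : ℂ))) (a := 0) (b := T) ?_
    · calc ‖∫ t in (0 : ℝ)..T, deriv g (s + (t : ℂ))‖ ≤ B / ε * |T - 0| := h
        _ = B / ε * T := by rw [sub_zero, abs_of_nonneg hT0]
    · intro t ht
      rw [Set.uIoc_of_le hT0] at ht
      have ht0 : 0 < t := ht.1
      have hre : ε < (s + (t : ℂ)).re := by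
        simp only [Complex.add_re, Complex.ofReal_re]
        linarith
      have hre0 : 0 < (s + (t : ℂ)).re := lt_trans hε hre
      have hb' := hB (s + (t : ℂ)) hre0
      rw [le_div_iff₀ hε]
      calc ‖deriv g (s + (t : ℂ))‖ * ε ≤ ‖deriv g (s + (t : ℂ))‖ * (s + (t : ℂ)).re :=
            mul_le_mul_of_nonneg_left (le_of_lt hre) (norm_nonneg _)
        _ = (s + (t : ℂ)).re * ‖deriv g (s + (t : ℂ))‖ := mul_comm _ _
        _ ≤ B := hb'
  calc ‖g s‖ = ‖g (s + (T : ℂ)) - ∫ t in (0 : ℝ)..T, deriv g (s + (t : ℂ))‖ := by rw [hgs]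
    _ ≤ ‖g (s + (T : ℂ))‖ + ‖∫ t in (0 : ℝ)..T, deriv g (s + (t : ℂ))‖ := norm_sub_le _ _
    _ ≤ M₁ + B / ε * T := add_le_add hgT hintbound
end

section
/- Let w : ℕ_{≥1} → (0,∞) satisfy w(k) ≤ w(kl) for all positive integers k, l, and let (b_n)_{n≥2} be complex numbers. Suppose C ≥ 0 is such that for every square-summable complex sequence (a_n): ∑_{n≥2} (log n)^{−2} |∑_{k|n, k≥2} (log k) b_k a_{n/k}|² ≤ C² ∑_{n≥1} |a_n|². Then for every complex sequence (a_n) with ∑_{n≥1}|a_n|²/w(n) < ∞: ∑_{n≥2} w(n)^{−1}(log n)^{−2} |∑_{k|n, k≥2} (log k) b_k a_{n/k}|² ≤ C² ∑_{n≥1} |a_n|²/w(n). (That is: if the Volterra operator T_g with symbol g = ∑_{n≥2} b_n n^{−s} is bounded on H², then it is bounded on H²_w with ‖T_g‖_{L(H²_w)} ≤ ‖T_g‖_{L(H²)}.) -/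
open scoped ENNReal
open MeasureTheory

/-- The generalized divisor function `d_γ(n)`, multiplicative with
`d_γ(p^r) = γ(γ+1)⋯(γ+r−1)/r!`. -/
noncomputable def dCoef (γ : ℝ) (n : ℕ) : ℝ :=
  n.factorization.prod fun _ r => (∏ i ∈ Finset.range r, (γ + i)) / (r.factorial : ℝ)

/-- `w` is one of the two admissible weights for the parameter `β`, with associated
exponent `δ`: either `w(n) = d(n)^β` with `δ = 2^β − 1`, or `w(n) = d_{β+1}(n)`
with `δ = β`. -/
def IsAdmissible (β : ℝ) (w : ℕ → ℝ) (δ : ℝ) : Prop :=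
  ((w = fun n => ((n.divisors.card : ℝ)) ^ β) ∧ δ = (2 : ℝ) ^ β - 1) ∨
  (w = dCoef (β + 1) ∧ δ = β)

/-- `∑_{n≥2} w(n)⁻¹ (log n)⁻² |∑_{k∣n, k≥2} (log k) b_k a_{n/k}|²`, the square of the
`H²_w`-norm of `T_g f` where `g, f` have coefficients `b, a`. -/
noncomputable def volterraSumLHS (w : ℕ → ℝ) (b a : ℕ → ℂ) : ℝ≥0∞ :=
  ∑' n : ℕ, if 2 ≤ n then
    ENNReal.ofReal
      (‖∑ k ∈ n.divisors.filter (fun k => 2 ≤ k),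
          (Real.log k : ℂ) * b k * a (n / k)‖ ^ 2 / (w n * Real.log n ^ 2))
  else 0

/-- The squared norm `∑_{n≥1} |a_n|²/w(n)` in `H²_w`. -/
noncomputable def hNorm2 (w : ℕ → ℝ) (a : ℕ → ℂ) : ℝ≥0∞ :=
  ∑' n : ℕ, if 1 ≤ n then ENNReal.ofReal (‖a n‖ ^ 2 / w n) else 0

/-- The Volterra operator with symbol `g(s) = ∑_{n≥2} b_n n^{−s}` is bounded on `H²_w`
with norm at most `C`. -/
def VolterraBounded (w : ℕ → ℝ) (b : ℕ → ℂ) (C : ℝ) : Prop :=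
  ∀ a : ℕ → ℂ, volterraSumLHS w b a ≤ ENNReal.ofReal (C ^ 2) * hNorm2 w a

/-- The coefficients `b` are supported on integers all of whose prime factors lie among
the first `d` primes (the class `𝒟_d`). -/
def SmoothSupport (d : ℕ) (b : ℕ → ℂ) : Prop :=
  ∀ n, b n ≠ 0 → ∀ p, p.Prime → p ∣ n → ∃ j < d, p = Nat.nth Nat.Prime j

/-- If the weight satisfies `w(k) ≤ w(kl)` and `T_g` is bounded on `H²`
(the unweighted case `w ≡ 1`) with norm at most `C`, then `T_g` is bounded on `H²_w` with
norm at most `C`. -/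
theorem statement7 (w : ℕ → ℝ) (hpos : ∀ n, 1 ≤ n → 0 < w n)
    (hmono : ∀ k l, 1 ≤ k → 1 ≤ l → w k ≤ w (k * l))
    (b : ℕ → ℂ) (C : ℝ) (hC : 0 ≤ C)
    (hbd : VolterraBounded (fun _ => 1) b C) :
    VolterraBounded w b C := by
  classical
  intro a
  set v : ℕ → ℝ := fun n => 1 / w n with hv
  set S : ℕ → ℂ := fun n => ∑ k ∈ n.divisors.filter (fun k => 2 ≤ k),
      (Real.log k : ℂ) * b k * a (n / k) with hS
  set A : ℕ → ℝ≥0∞ := fun n =>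
    if 2 ≤ n then ENNReal.ofReal (‖S n‖ ^ 2 / Real.log n ^ 2) else 0 with hA
  set B : ℕ → ℝ≥0∞ := fun n => if 1 ≤ n then ENNReal.ofReal (‖a n‖ ^ 2) else 0 with hB
  have hvmono : ∀ n k, 1 ≤ n → 1 ≤ k → v (n * k) ≤ v n := fun n k hn hk =>
    one_div_le_one_div_of_le (hpos n hn) (hmono n k hn hk)
  -- key pointwise-in-t inequality
  have key : ∀ t : ℝ,
      (∑' n, (Set.Ioo (0:ℝ) (v n)).indicator (fun _ => A n) t)
        ≤ ENNReal.ofReal (C ^ 2) *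
          ∑' n, (Set.Ioo (0:ℝ) (v n)).indicator (fun _ => B n) t := by
    intro t
    rcases le_or_gt t 0 with ht | ht
    · have h0 : ∀ n : ℕ, (Set.Ioo (0:ℝ) (v n)).indicator (fun _ => A n) t = 0 := by
        intro n
        exact Set.indicator_of_notMem (fun hmem => absurd hmem.1 (not_lt.mpr ht)) _
      simp [h0]
    · set a' : ℕ → ℂ := fun m => if 1 ≤ m ∧ t < v m then a m else 0 with ha'
      have h1 := hbd a'
      have hle1 : (∑' n, (Set.Ioo (0:ℝ) (v n)).indicator (fun _ => A n) t)
          ≤ volterraSumLHS (fun _ => 1) b a' := by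
        unfold volterraSumLHS
        refine ENNReal.tsum_le_tsum fun n => ?_
        by_cases hn : 2 ≤ n
        · by_cases hmem : t ∈ Set.Ioo (0:ℝ) (v n)
          · rw [Set.indicator_of_mem hmem]
            have hsum : S n = ∑ k ∈ n.divisors.filter (fun k => 2 ≤ k),
                (Real.log k : ℂ) * b k * a' (n / k) := by
              refine Finset.sum_congr rfl fun k hk => ?_
              simp only [Finset.mem_filter, Nat.mem_divisors] at hk
              have hdvd : k ∣ n := hk.1.1
              have hk2 : 2 ≤ k := hk.2
              have hn0 : n ≠ 0 := hk.1.2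
              have hq1 : 1 ≤ n / k :=
                (Nat.one_le_div_iff (by omega)).mpr (Nat.le_of_dvd (by omega) hdvd)
              have hvle : v n ≤ v (n / k) := by
                have hnk : n / k * k = n := Nat.div_mul_cancel hdvd
                calc v n = v (n / k * k) := by rw [hnk]
                  _ ≤ v (n / k) := hvmono _ _ hq1 (by omega)
              have ha'eq : a' (n / k) = a (n / k) := by
                simp [ha', hq1, lt_of_lt_of_le hmem.2 hvle]
              rw [ha'eq]
            simp only [hA, if_pos hn]
            rw [hsum]
            simp
          · rw [Set.indicator_of_notMem hmem]; exact zero_le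
        · have : (Set.Ioo (0:ℝ) (v n)).indicator (fun _ => A n) t ≤ A n :=
            Set.indicator_le_self _ _ t
          simpa [hA, hn] using this
      have heq2 : hNorm2 (fun _ => 1) a'
          = ∑' n, (Set.Ioo (0:ℝ) (v n)).indicator (fun _ => B n) t := by
        unfold hNorm2
        refine tsum_congr fun n => ?_
        by_cases hn : 1 ≤ n
        · by_cases hvt : t < v n
          · have hmem : t ∈ Set.Ioo (0:ℝ) (v n) := ⟨ht, hvt⟩
            rw [Set.indicator_of_mem hmem]
            simp [hB, hn, ha', hvt]
          · have hmem : t ∉ Set.Ioo (0:ℝ) (v n) := fun hmem => hvt hmem.2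
            rw [Set.indicator_of_notMem hmem]
            simp [ha', hn, hvt]
        · have hmem : (Set.Ioo (0:ℝ) (v n)).indicator (fun _ => B n) t = 0 := by
            rcases Set.indicator_eq_zero_or_self (Set.Ioo (0:ℝ) (v n)) (fun _ => B n) t with h | h
            · exact h
            · rw [h]; simp [hB, hn]
          simp [hmem, hn]
      calc (∑' n, (Set.Ioo (0:ℝ) (v n)).indicator (fun _ => A n) t)
          ≤ volterraSumLHS (fun _ => 1) b a' := hle1
        _ ≤ ENNReal.ofReal (C ^ 2) * hNorm2 (fun _ => 1) a' := h1
        _ = _ := by rw [heq2]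
  -- rewrite LHS as an integral
  have hmeasA : ∀ n : ℕ, Measurable fun t : ℝ =>
      (Set.Ioo (0:ℝ) (v n)).indicator (fun _ => A n) t :=
    fun n => measurable_const.indicator measurableSet_Ioo
  have hmeasB : ∀ n : ℕ, Measurable fun t : ℝ =>
      (Set.Ioo (0:ℝ) (v n)).indicator (fun _ => B n) t :=
    fun n => measurable_const.indicator measurableSet_Ioo
  have hint : ∀ (c : ℝ≥0∞) (r : ℝ),
      ∫⁻ t : ℝ, (Set.Ioo (0:ℝ) r).indicator (fun _ => c) t = c * ENNReal.ofReal r := by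
    intro c r
    rw [lintegral_indicator_const measurableSet_Ioo, Real.volume_Ioo, sub_zero]
  have hLHS : volterraSumLHS w b a
      = ∫⁻ t : ℝ, ∑' n, (Set.Ioo (0:ℝ) (v n)).indicator (fun _ => A n) t := by
    rw [lintegral_tsum fun n => (hmeasA n).aemeasurable]
    unfold volterraSumLHS
    refine tsum_congr fun n => ?_
    rw [hint]
    by_cases hn : 2 ≤ n
    · simp only [hA, if_pos hn, hn, if_true]
      rw [← ENNReal.ofReal_mul (by positivity)]
      rw [hv, mul_comm (w n), ← div_div, div_eq_mul_one_div]
    · simp [hA, hn]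
  have hRHS : (∫⁻ t : ℝ, ∑' n, (Set.Ioo (0:ℝ) (v n)).indicator (fun _ => B n) t)
      = hNorm2 w a := by
    rw [lintegral_tsum fun n => (hmeasB n).aemeasurable]
    unfold hNorm2
    refine tsum_congr fun n => ?_
    rw [hint]
    by_cases hn : 1 ≤ n
    · simp only [hB, if_pos hn, hn, if_true]
      rw [← ENNReal.ofReal_mul (by positivity)]
      congr 1
      rw [hv]
      field_simp
    · simp [hB, hn]
  calc volterraSumLHS w b a
      = ∫⁻ t : ℝ, ∑' n, (Set.Ioo (0:ℝ) (v n)).indicator (fun _ => A n) t := hLHS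
    _ ≤ ∫⁻ t : ℝ, ENNReal.ofReal (C ^ 2) *
          ∑' n, (Set.Ioo (0:ℝ) (v n)).indicator (fun _ => B n) t := lintegral_mono key
    _ = ENNReal.ofReal (C ^ 2) *
          ∫⁻ t : ℝ, ∑' n, (Set.Ioo (0:ℝ) (v n)).indicator (fun _ => B n) t := by
        rw [lintegral_const_mul _ (by exact Measurable.ennreal_tsum hmeasB)]
    _ = ENNReal.ofReal (C ^ 2) * hNorm2 w a := by rw [hRHS]
end

section
/- Let w : ℕ_{≥1} → (0,∞) be multiplicative with w(mn) ≤ w(m)w(n) and w(m) ≤ w(mn) for all m, n ≥ 1 (in particular, both admissible weights d(n)^β and d_{β+1}(n) qualify). Let g(s) = ∑_{n≥2} b_n n^{−s} be a Dirichlet series with some b_N ≠ 0 (N ≥ 2), and for n ≥ 1 let e_{w,n}(s) = w(n)^{1/2} n^{−s}, so that ‖T_g e_{w,n}‖²_{H²_w} = ∑_{k≥2} |b_k|² (log k)² (log(kn))^{−2} · w(n)/w(kn). Then for every p ∈ (0, ∞): ∑_{n≥1} ‖T_g e_{w,n}‖^p_{H²_w} = +∞. Consequently T_g does not belong to any Schatten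 class S_p(H²_w), 0 < p < ∞. -/
open scoped ENNReal

/-- For a multiplicative weight `w` with `w(mn) ≤ w(m)w(n)` and
`w(m) ≤ w(mn)`, and a nonzero symbol `g(s) = ∑_{n≥2} b_n n^{−s}`, the quantities
`‖T_g e_{w,n}‖²_{H²_w} = ∑_{k≥2} |b_k|²(log k)²(log kn)⁻² w(n)/w(kn)` satisfy
`∑_{n≥1} ‖T_g e_{w,n}‖^p = +∞` for every `0 < p < ∞`; hence `T_g` is in no Schatten
class. -/
theorem statement12 (w : ℕ → ℝ) (hpos : ∀ n, 1 ≤ n → 0 < w n)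
    (hmul : ∀ m n, 1 ≤ m → 1 ≤ n → Nat.Coprime m n → w (m * n) = w m * w n)
    (hsub : ∀ m n, 1 ≤ m → 1 ≤ n → w (m * n) ≤ w m * w n)
    (hmono : ∀ m n, 1 ≤ m → 1 ≤ n → w m ≤ w (m * n))
    (b : ℕ → ℂ) (hb : ∀ n, b n ≠ 0 → 2 ≤ n)
    (N : ℕ) (hN : 2 ≤ N) (hbN : b N ≠ 0)
    (p : ℝ) (hp : 0 < p) :
    (∑' n : ℕ, if 1 ≤ n then
        (∑' k : ℕ, if 2 ≤ k then
            ENNReal.ofReal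
              (‖b k‖ ^ 2 * (Real.log k) ^ 2 / (Real.log ((k : ℝ) * n)) ^ 2 *
                (w n / w (k * n)))
          else 0) ^ (p / 2)
      else 0) = ⊤ := by
  have hwN : 0 < w N := hpos N (by omega)
  set A : ℝ := ‖b N‖ ^ 2 * (Real.log N) ^ 2 with hA_def
  have hA : 0 < A := by
    have h1 : 0 < ‖b N‖ := norm_pos_iff.mpr hbN
    have h2 : 0 < Real.log N := Real.log_pos (by exact_mod_cast by omega)
    positivity
  set c : ℝ := A / w N with hc_def
  have hc : 0 < c := div_pos hA hwN
  set ε : ℝ := (2 * p)⁻¹ with hε_def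
  have hε : 0 < ε := by positivity
  set K : ℝ := (N : ℝ) ^ ε / ε with hK_def
  have hNpos : (0:ℝ) < N := by exact_mod_cast (by omega : 0 < N)
  have hK : 0 < K := by positivity
  set c' : ℝ := (c * (K ^ 2)⁻¹) ^ (p / 2) with hc'_def
  have hc' : 0 < c' := Real.rpow_pos_of_pos (by positivity) _
  -- divergence of the lower bound series
  have hdiv : ¬ Summable (fun n : ℕ => c' * (n : ℝ) ^ (-(2⁻¹) : ℝ)) := by
    intro h
    have h2 := (summable_mul_left_iff hc'.ne').mp h
    rw [Real.summable_nat_rpow] at h2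
    norm_num at h2
  have htop : (∑' n : ℕ, ENNReal.ofReal (c' * (n : ℝ) ^ (-(2⁻¹) : ℝ))) = ⊤ := by
    by_contra hne
    apply hdiv
    have hsum : Summable (fun n : ℕ => (c' * (n : ℝ) ^ (-(2⁻¹) : ℝ)).toNNReal) :=
      ENNReal.tsum_coe_ne_top_iff_summable.mp (by simpa [ENNReal.ofReal] using hne)
    have := NNReal.summable_coe.mpr hsum
    refine this.congr fun n => Real.coe_toNNReal _ ?_
    exact mul_nonneg hc'.le (Real.rpow_nonneg n.cast_nonneg _)
  rw [eq_top_iff, ← htop]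
  refine ENNReal.tsum_le_tsum fun n => ?_
  by_cases hn : 1 ≤ n
  · rw [if_pos hn]
    have hn1 : (1:ℝ) ≤ n := by exact_mod_cast hn
    set t : ℝ := Real.log ((N : ℝ) * n) with ht_def
    have ht : 0 < t := Real.log_pos (by nlinarith [show (2:ℝ) ≤ N from by exact_mod_cast hN])
    -- log bound
    have hlog : t ≤ K * (n : ℝ) ^ ε := by
      calc t ≤ ((N : ℝ) * n) ^ ε / ε := Real.log_le_rpow_div (by positivity) hε
        _ = K * (n : ℝ) ^ ε := by
            rw [Real.mul_rpow (by positivity) (by positivity), hK_def]; ring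
    have ht2 : t ^ 2 ≤ (K * (n : ℝ) ^ ε) ^ 2 := by nlinarith
    -- real inequality 1
    have h1 : c * ((K * (n : ℝ) ^ ε) ^ 2)⁻¹ ≤ c * (t ^ 2)⁻¹ := by
      gcongr c * ?_
      exact inv_anti₀ (by positivity) ht2
    have h2 : (c * ((K * (n : ℝ) ^ ε) ^ 2)⁻¹) ^ (p / 2) = c' * (n : ℝ) ^ (-(2⁻¹) : ℝ) := by
      have hn0 : (0:ℝ) ≤ n := n.cast_nonneg
      have e1 : ((K * (n : ℝ) ^ ε) ^ 2)⁻¹ = (K ^ 2)⁻¹ * (n : ℝ) ^ (-(2 * ε)) := by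
        rw [mul_pow, ← Real.rpow_natCast ((n : ℝ) ^ ε) 2, ← Real.rpow_mul hn0, mul_inv,
          ← Real.rpow_neg hn0]
        norm_num [mul_comm]
      rw [e1, ← mul_assoc, Real.mul_rpow (by positivity) (Real.rpow_nonneg hn0 _),
        ← Real.rpow_mul hn0]
      have : -(2 * ε) * (p / 2) = -(2⁻¹) := by
        rw [hε_def]; field_simp
      rw [this, hc'_def]
    have hineq1 : c' * (n : ℝ) ^ (-(2⁻¹) : ℝ) ≤ (c * (t ^ 2)⁻¹) ^ (p / 2) := by
      rw [← h2]
      exact Real.rpow_le_rpow (by positivity) h1 (by positivity)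
    -- real inequality 2
    have hwn : 0 < w n := hpos n hn
    have hwNn : 0 < w (N * n) := hpos (N * n) (Nat.mul_pos (by omega) hn)
    have hstep : (w N)⁻¹ ≤ w n / w (N * n) := by
      rw [inv_eq_one_div, div_le_div_iff₀ hwN hwNn]
      nlinarith [hsub N n (by omega) hn]
    have hineq2 : c * (t ^ 2)⁻¹ ≤ A / t ^ 2 * (w n / w (N * n)) := by
      calc c * (t ^ 2)⁻¹ = A / t ^ 2 * (w N)⁻¹ := by rw [hc_def]; ring
        _ ≤ A / t ^ 2 * (w n / w (N * n)) := by
            exact mul_le_mul_of_nonneg_left hstep (by positivity)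
    -- pass to ENNReal
    have inner_ge : ENNReal.ofReal (A / t ^ 2 * (w n / w (N * n))) ≤
        ∑' k : ℕ, if 2 ≤ k then
            ENNReal.ofReal
              (‖b k‖ ^ 2 * (Real.log k) ^ 2 / (Real.log ((k : ℝ) * n)) ^ 2 *
                (w n / w (k * n)))
          else 0 := by
      have := ENNReal.le_tsum (f := fun k : ℕ => if 2 ≤ k then
            ENNReal.ofReal
              (‖b k‖ ^ 2 * (Real.log k) ^ 2 / (Real.log ((k : ℝ) * n)) ^ 2 *
                (w n / w (k * n)))
          else 0) N
      simpa [hN, hA_def, ht_def] using this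
    have base : ENNReal.ofReal (c * (t ^ 2)⁻¹) ≤
        ∑' k : ℕ, if 2 ≤ k then
            ENNReal.ofReal
              (‖b k‖ ^ 2 * (Real.log k) ^ 2 / (Real.log ((k : ℝ) * n)) ^ 2 *
                (w n / w (k * n)))
          else 0 :=
      le_trans (ENNReal.ofReal_le_ofReal hineq2) inner_ge
    calc ENNReal.ofReal (c' * (n : ℝ) ^ (-(2⁻¹) : ℝ))
        ≤ ENNReal.ofReal ((c * (t ^ 2)⁻¹) ^ (p / 2)) := ENNReal.ofReal_le_ofReal hineq1
      _ = (ENNReal.ofReal (c * (t ^ 2)⁻¹)) ^ (p / 2) :=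
          (ENNReal.ofReal_rpow_of_nonneg (by positivity) (by positivity)).symm
      _ ≤ _ := ENNReal.rpow_le_rpow base (by positivity)
  · have hn0 : n = 0 := by omega
    subst hn0
    simp [Real.zero_rpow (show (-(2⁻¹) : ℝ) ≠ 0 by norm_num)]
end

section
/- Let β > 0 and let w be one of the two admissible weights, and let Ω(n) denote the number of prime factors of n counted with multiplicity. For every ε > 0 there is no constant C such that every 2-homogeneous Dirichlet series g(s) = ∑_{Ω(n)=2} b_n n^{−s} satisfies ‖T_g‖_{L(H²_w)} ≤ C (∑_{Ω(n)=2} |b_n|² (log n)/(log log n)^{1+ε})^{1/2}. Equivalently: for all ε > 0 and C > 0 there exist complex coefficients (b_n) supported on {n : Ω(n) = 2} with ∑_{Ω(n)=2}|b_n|²(log n)(log log n)^{−1−ε} < ∞, and a finitely supported sequence (a_n), such that ∑_{n≥2} w(n)^{−1}(log n)^{−2} |∑_{k|n, k≥2} (log k) b_k a_{n/k}|² > C² (∑_{Ω(n)=2} |b_n|² (log n)(log log n)^{−1−ε}) · ∑_{n≥1} |a_n|²/w(n). -/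
open scoped ENNReal

/-! ### Auxiliary lemmas -/

open Finset in
lemma mem_of_prime_dvd_prodQ {p : ℕ} (hp : p.Prime) {T : Finset ℕ}
    (hT : ∀ q ∈ T, q.Prime) (h : p ∣ ∏ q ∈ T, q) : p ∈ T := by
  rcases (Nat.Prime.prime hp).dvd_finset_prod_iff _ |>.mp h with ⟨q, hq, hdvd⟩
  have := ((Nat.prime_dvd_prime_iff_eq hp (hT q hq)).mp hdvd)
  rwa [this]

open Finset in
lemma prod_inj_of_primes {T T' : Finset ℕ} (hT : ∀ p ∈ T, p.Prime)
    (hT' : ∀ p ∈ T', p.Prime) (h : ∏ p ∈ T, p = ∏ p ∈ T', p) : T = T' := by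
  ext p
  constructor
  · intro hpT
    exact mem_of_prime_dvd_prodQ (hT p hpT) hT' (h ▸ Finset.dvd_prod_of_mem _ hpT)
  · intro hpT'
    exact mem_of_prime_dvd_prodQ (hT' p hpT') hT (h ▸ Finset.dvd_prod_of_mem _ hpT')

lemma prodQ_pos {T : Finset ℕ} (hT : ∀ q ∈ T, q.Prime) : 0 < ∏ q ∈ T, q :=
  Finset.prod_pos fun q hq => (hT q hq).pos

open Finset in
lemma card_divisors_prodQ {T : Finset ℕ} (hT : ∀ p ∈ T, p.Prime) :
    (∏ p ∈ T, p).divisors.card = 2 ^ T.card := by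
  induction T using Finset.induction_on with
  | empty => simp
  | @insert p T hpT ih =>
    have hp := hT p (Finset.mem_insert_self p T)
    have hT' : ∀ q ∈ T, Nat.Prime q := fun q hq => hT q (Finset.mem_insert_of_mem hq)
    have hcop : p.Coprime (∏ q ∈ T, q) := by
      apply Nat.Coprime.prod_right
      intro q hq
      exact (Nat.coprime_primes hp (hT' q hq)).mpr (by rintro rfl; exact hpT hq)
    rw [Finset.prod_insert hpT, hcop.card_divisors_mul, ih hT',
      Nat.Prime.divisors hp, Finset.card_insert_of_notMem hpT]
    rw [Finset.card_pair (Ne.symm hp.ne_one)]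
    ring

open Finset in
lemma dCoef_prodQ (γ : ℝ) {T : Finset ℕ} (hT : ∀ p ∈ T, p.Prime) :
    dCoef γ (∏ p ∈ T, p) = γ ^ T.card := by
  induction T using Finset.induction_on with
  | empty => simp [dCoef]
  | @insert p T hpT ih =>
    have hp := hT p (Finset.mem_insert_self p T)
    have hT' : ∀ q ∈ T, Nat.Prime q := fun q hq => hT q (Finset.mem_insert_of_mem hq)
    have hTpos : 0 < ∏ q ∈ T, q := prodQ_pos hT'
    rw [Finset.prod_insert hpT]
    unfold dCoef
    rw [Nat.factorization_mul hp.ne_zero hTpos.ne', hp.factorization]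
    have hdisj : Disjoint (Finsupp.single p 1).support (∏ q ∈ T, q).factorization.support := by
      rw [Finsupp.support_single_ne_zero _ one_ne_zero, Nat.support_factorization]
      simp only [Finset.disjoint_singleton_left]
      intro hmem
      exact hpT (mem_of_prime_dvd_prodQ hp hT' (Nat.dvd_of_mem_primeFactors hmem))
    rw [Finsupp.prod_add_index_of_disjoint hdisj]
    rw [Finsupp.prod_single_index (by simp)]
    have : ((∏ i ∈ Finset.range 1, (γ + i)) / ((1:ℕ).factorial : ℝ)) = γ := by simp
    rw [this]
    rw [show (∏ q ∈ T, q).factorization.prod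
        (fun _ r => (∏ i ∈ Finset.range r, (γ + i)) / (r.factorial : ℝ)) = dCoef γ (∏ q ∈ T, q) from rfl,
      ih hT', Finset.card_insert_of_notMem hpT, pow_succ]
    ring

lemma w_prod {β : ℝ} (hβ : 0 < β) {w : ℕ → ℝ} {δ : ℝ} (hw : IsAdmissible β w δ) :
    0 < δ ∧ ∀ T : Finset ℕ, (∀ p ∈ T, p.Prime) → w (∏ p ∈ T, p) = (1+δ) ^ T.card := by
  rcases hw with ⟨hw, hδ⟩ | ⟨hw, hδ⟩
  · have h2β : (1:ℝ) < (2:ℝ) ^ β := by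
      rw [show ((2:ℝ) ^ β) = (2:ℝ) ^ β from rfl]
      exact Real.one_lt_rpow_iff_of_pos (by norm_num) |>.mpr (Or.inl ⟨by norm_num, hβ⟩)
    constructor
    · rw [hδ]; linarith
    · intro T hT
      rw [hw]
      show (((∏ p ∈ T, p).divisors.card : ℕ) : ℝ) ^ β = _
      rw [card_divisors_prodQ hT]
      have h1 : (((2:ℕ) ^ T.card : ℕ) : ℝ) = ((2:ℝ) ^ (T.card : ℝ)) := by
        push_cast
        rw [Real.rpow_natCast]
      have h2 : (1:ℝ) + δ = (2:ℝ) ^ β := by rw [hδ]; ring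
      rw [h1, ← Real.rpow_mul (by norm_num : (0:ℝ) ≤ 2), mul_comm (T.card : ℝ) β,
        Real.rpow_mul (by norm_num : (0:ℝ) ≤ 2), Real.rpow_natCast, h2]
  · constructor
    · rw [hδ]; exact hβ
    · intro T hT
      rw [hw, dCoef_prodQ _ hT, hδ]
      ring_nf

lemma omega_two {p q : ℕ} (hp : p.Prime) (hq : q.Prime) :
    (p*q).primeFactorsList.length = 2 := by
  have h := Nat.perm_primeFactorsList_mul hp.ne_zero hq.ne_zero
  rw [h.length_eq, List.length_append, Nat.primeFactorsList_prime hp,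
    Nat.primeFactorsList_prime hq]
  rfl

lemma exists_nth_prime_le_sq : ∀ K : ℕ, ∃ n, K ≤ n ∧ Nat.nth Nat.Prime n ≤ (n+1)^2 := by
  intro K
  by_contra hcon
  push_neg at hcon
  have hgt : ∀ n, K ≤ n → ((n+1)^2 : ℕ) < Nat.nth Nat.Prime n := fun n hn => hcon n hn
  have hsum2 : Summable (fun n : ℕ => (1 : ℝ) / (n+1)^2) := by
    have := Real.summable_one_div_nat_pow.mpr (by norm_num : 1 < 2)
    exact_mod_cast (summable_nat_add_iff 1).mpr this
  have hsum2' : Summable (fun n : ℕ => (1 : ℝ) / ((n + K)+1)^2) := by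
    exact_mod_cast (summable_nat_add_iff K).mpr hsum2
  have hsumnth' : Summable (fun n : ℕ => (1 : ℝ) / (Nat.nth Nat.Prime (n + K))) := by
    apply Summable.of_nonneg_of_le (fun n => by positivity) _ hsum2'
    intro n
    apply one_div_le_one_div_of_le (by positivity)
    have h := hgt (n + K) (by omega)
    have h2 : (((n+K+1):ℕ)^2 : ℝ) ≤ ((Nat.nth Nat.Prime (n+K) : ℕ) : ℝ) := by exact_mod_cast h.le
    push_cast at h2 ⊢
    linarith
  have hsumnth : Summable (fun n : ℕ => (1 : ℝ) / (Nat.nth Nat.Prime n)) :=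
    (summable_nat_add_iff K).mp hsumnth'
  have hinj : Function.Injective (Nat.nth Nat.Prime) :=
    Nat.nth_injective Nat.infinite_setOf_prime
  have hzero : ∀ x ∉ Set.range (Nat.nth Nat.Prime),
      Set.indicator {p | Nat.Prime p} (fun n : ℕ => (1:ℝ)/n) x = 0 := by
    intro x hx
    apply Set.indicator_of_notMem
    intro hxp
    exact hx ⟨Nat.count Nat.Prime x, Nat.nth_count hxp⟩
  have := (hinj.summable_iff hzero).mp ?_
  · exact not_summable_one_div_on_primes this
  · convert hsumnth using 1
    funext n
    simp only [Function.comp]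
    exact Set.indicator_of_mem (Nat.nth_mem_of_infinite Nat.infinite_setOf_prime n) _

lemma primes_exist (K : ℕ) :
    ∃ Q : Finset ℕ, (∀ q ∈ Q, Nat.Prime q) ∧ K ≤ Q.card ∧ ∀ q ∈ Q, q ≤ Q.card ^ 2 := by
  obtain ⟨n, hKn, hle⟩ := exists_nth_prime_le_sq K
  set p := Nat.nth Nat.Prime n with hp
  have hcard : ((Finset.range (p+1)).filter Nat.Prime).card = n + 1 := by
    rw [← Nat.count_eq_card_filter_range, Nat.count_succ,
      Nat.count_nth_of_infinite Nat.infinite_setOf_prime,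
      if_pos (Nat.nth_mem_of_infinite Nat.infinite_setOf_prime n)]
  refine ⟨(Finset.range (p+1)).filter Nat.Prime, fun q hq => (Finset.mem_filter.mp hq).2, ?_, ?_⟩
  · omega
  · intro q hq
    rw [hcard]
    have := (Finset.mem_range.mp (Finset.mem_filter.mp hq).1)
    omega

set_option maxHeartbeats 2000000 in

/-- Sharpness of the weight `(log n)/(log log n)` for 2-homogeneous
symbols: for every `ε > 0` and `C > 0`, there is a 2-homogeneous symbol `b` with
`∑_{Ω(n)=2} |b_n|²(log n)(log log n)^{−1−ε} < ∞` and a finitely supported sequence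
violating the corresponding bound on `‖T_g‖`. (`Ω(n)` = number of prime factors of `n`
with multiplicity = `n.primeFactorsList.length`.) -/
theorem statement14 (β : ℝ) (hβ : 0 < β) (w : ℕ → ℝ) (δ : ℝ)
    (hw : IsAdmissible β w δ) (ε : ℝ) (hε : 0 < ε) (C : ℝ) (hC : 0 < C) :
    ∃ b : ℕ → ℂ, (∀ n, b n ≠ 0 → n.primeFactorsList.length = 2) ∧
      (∑' n : ℕ, if n.primeFactorsList.length = 2 then
          ENNReal.ofReal
            (‖b n‖ ^ 2 * Real.log n / (Real.log (Real.log n)) ^ (1 + ε))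
        else 0) ≠ ⊤ ∧
      ∃ aa : ℕ → ℂ, (Function.support aa).Finite ∧
        ENNReal.ofReal (C ^ 2) *
            (∑' n : ℕ, if n.primeFactorsList.length = 2 then
              ENNReal.ofReal
                (‖b n‖ ^ 2 * Real.log n / (Real.log (Real.log n)) ^ (1 + ε))
            else 0) *
            hNorm2 w aa
          < volterraSumLHS w b aa := by
  classical
  obtain ⟨hδ0, hwprod⟩ := w_prod hβ hw
  have hδ1 : (1:ℝ) < 1 + δ := by linarith
  -- numeric setup
  set M : ℝ := max (320 * C^2 * (1+δ)^2) 1 with hMdef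
  have hM1 : 1 ≤ M := le_max_right _ _
  have hM0 : 0 < M := by linarith
  have hMge : 320 * C^2 * (1+δ)^2 ≤ M := le_max_left _ _
  set R : ℝ := 2 * M ^ (ε⁻¹) with hRdef
  have hMε : 0 < M ^ (ε⁻¹) := Real.rpow_pos_of_pos hM0 _
  have hR0 : 0 < R := by positivity
  set K : ℕ := max 4 (⌈Real.exp R⌉₊ + 1) with hKdef
  obtain ⟨Q, hQp, hQK, hQsq⟩ := primes_exist K
  set d : ℕ := Q.card with hd
  have hd4 : 4 ≤ d := le_trans (le_max_left _ _) hQK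
  have hdpos : (0:ℝ) < d := by exact_mod_cast (by omega : 0 < d)
  have hdR : R ≤ Real.log d := by
    rw [Real.le_log_iff_exp_le hdpos]
    calc Real.exp R ≤ (⌈Real.exp R⌉₊ : ℝ) := Nat.le_ceil _
    _ ≤ (d:ℝ) := by
        have : ⌈Real.exp R⌉₊ ≤ d := le_trans (by omega : ⌈Real.exp R⌉₊ ≤ K) hQK
        exact_mod_cast this
  have hlogd : 0 < Real.log d := lt_of_lt_of_le hR0 hdR
  set j : ℕ := d / 2 with hj
  have hjd : j + 1 ≤ d := by omega
  -- primes setup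
  set N : ℕ := ∏ q ∈ Q, q with hN
  have hNpos : 0 < N := prodQ_pos hQp
  have h2d : 2^d ≤ N := by
    calc (2:ℕ)^d = ∏ _q ∈ Q, 2 := by rw [Finset.prod_const, hd]
    _ ≤ ∏ q ∈ Q, q := Finset.prod_le_prod' (fun q hq => (hQp q hq).two_le)
  obtain ⟨P, hPp, hNP, hP2N⟩ := Nat.exists_prime_lt_and_le_two_mul N hNpos.ne'
  have hqN : ∀ q ∈ Q, q ≤ N := fun q hq => Nat.le_of_dvd hNpos (Finset.dvd_prod_of_mem _ hq)
  have hPQ : ∀ q ∈ Q, q < P := fun q hq => lt_of_le_of_lt (hqN q hq) hNP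
  have hPpos : 0 < P := hPp.pos
  have hP2 : 2 ≤ P := hPp.two_le
  -- the symbol and the test sequence
  set B : Finset ℕ := Q.image (fun q => P * q) with hB
  set b : ℕ → ℂ := fun n => if n ∈ B then 1 else 0 with hb
  set A : Finset ℕ := (Finset.powersetCard j Q).image (fun T => ∏ q ∈ T, q) with hA
  set a : ℕ → ℂ := fun m => if m ∈ A then 1 else 0 with ha
  have hΩB : ∀ n ∈ B, n.primeFactorsList.length = 2 := by
    intro n hn
    obtain ⟨q, hq, rfl⟩ := Finset.mem_image.mp hn
    exact omega_two hPp (hQp q hq)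
  have hsupp : ∀ n, b n ≠ 0 → n.primeFactorsList.length = 2 := by
    intro n hbn
    by_cases h : n ∈ B
    · exact hΩB n h
    · simp [hb, h] at hbn
  have hafin : (Function.support a).Finite := by
    apply Set.Finite.subset A.finite_toSet
    intro x hx
    by_contra h
    apply hx
    have hxA : x ∉ A := fun hmem => h (Finset.mem_coe.mpr hmem)
    simp [ha, hxA]
  -- main quantities
  set θ : ℝ := ∑ q ∈ Q, Real.log q with hθ
  have hθ0 : 0 ≤ θ := Finset.sum_nonneg fun q hq =>
    Real.log_nonneg (by exact_mod_cast (hQp q hq).one_le)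
  set σ : ℝ := (Real.log 2 + 2*θ) / ((Real.log d / 2) ^ (1+ε)) with hσdef
  have hbase : 0 < Real.log d / 2 := by linarith
  have hσ0 : 0 ≤ σ := by
    apply div_nonneg
    · have := Real.log_nonneg (by norm_num : (1:ℝ) ≤ 2); linarith
    · positivity
  set κ : ℝ := ((j:ℝ)+1)^2 / (4*(1+δ)^(j+2)) with hκdef
  have hκ0 : 0 < κ := by positivity
  set S : ℝ≥0∞ := (∑' n : ℕ, if n.primeFactorsList.length = 2 then
      ENNReal.ofReal (‖b n‖ ^ 2 * Real.log n / (Real.log (Real.log n)) ^ (1 + ε))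
    else 0) with hSdef
  have hlogN : Real.log N = θ := by
    rw [hN, Nat.cast_prod, Real.log_prod]
    intro q hq
    exact_mod_cast (hQp q hq).pos.ne'
  -- bound on each term of S
  have hterm : ∀ n ∈ B, Real.log n / (Real.log (Real.log n)) ^ (1+ε) ≤ σ := by
    intro n hn
    obtain ⟨q, hq, rfl⟩ := Finset.mem_image.mp hn
    have hqpos := (hQp q hq).pos
    have hPqpos : 0 < P * q := Nat.mul_pos hPpos hqpos
    have hPqposR : (0:ℝ) < ((P*q : ℕ) : ℝ) := by exact_mod_cast hPqpos
    have hnum : Real.log ((P*q : ℕ) : ℝ) ≤ Real.log 2 + 2*θ := by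
      have h1 : ((P*q : ℕ):ℝ) ≤ 2*(N:ℝ)^2 := by
        have h2 : (P*q : ℕ) ≤ 2*N*N := Nat.mul_le_mul hP2N (hqN q hq)
        calc ((P*q:ℕ):ℝ) ≤ ((2*N*N : ℕ):ℝ) := by exact_mod_cast h2
        _ = 2*(N:ℝ)^2 := by push_cast; ring
      calc Real.log ((P*q:ℕ):ℝ) ≤ Real.log (2*(N:ℝ)^2) := Real.log_le_log hPqposR h1
      _ = Real.log 2 + 2*Real.log N := by
          rw [Real.log_mul (by norm_num) (by positivity), Real.log_pow]
          push_cast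
          ring
      _ = Real.log 2 + 2*θ := by rw [hlogN]
    have h2dn : ((2:ℝ))^(d:ℕ) ≤ ((P*q:ℕ):ℝ) := by
      have h3 : 2^d ≤ P*q :=
        le_trans (le_trans h2d (le_of_lt hNP)) (Nat.le_mul_of_pos_right P hqpos)
      exact_mod_cast h3
    have hsqrt2 : (2:ℝ) ≤ Real.sqrt d := by
      rw [show (2:ℝ) = Real.sqrt 4 by
        rw [show (4:ℝ) = 2^2 by norm_num, Real.sqrt_sq (by norm_num : (0:ℝ) ≤ 2)]]
      exact Real.sqrt_le_sqrt (by exact_mod_cast hd4)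
    have hd2 : Real.sqrt d ≤ Real.log ((P*q:ℕ):ℝ) := by
      have hlog2 : (1/2:ℝ) ≤ Real.log 2 := by
        have := Real.log_two_gt_d9; linarith
      have hs : Real.sqrt d * Real.sqrt d = (d:ℝ) := Real.mul_self_sqrt hdpos.le
      calc Real.sqrt d ≤ (d:ℝ)*Real.log 2 := by nlinarith [Real.sqrt_nonneg (d:ℝ)]
      _ = Real.log ((2:ℝ)^(d:ℕ)) := by simp [Real.log_pow]
      _ ≤ Real.log ((P*q:ℕ):ℝ) := Real.log_le_log (by positivity) h2dn
    have hll : Real.log d / 2 ≤ Real.log (Real.log ((P*q:ℕ):ℝ)) := by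
      calc Real.log d / 2 = Real.log (Real.sqrt d) := (Real.log_sqrt hdpos.le).symm
      _ ≤ Real.log (Real.log ((P*q:ℕ):ℝ)) :=
          Real.log_le_log (by positivity) hd2
    have hrp : (Real.log d / 2)^(1+ε) ≤ (Real.log (Real.log ((P*q:ℕ):ℝ)))^(1+ε) :=
      Real.rpow_le_rpow hbase.le hll (by linarith)
    rw [hσdef]
    exact div_le_div₀ (by
        have := Real.log_nonneg (by norm_num : (1:ℝ) ≤ 2); linarith)
      hnum (by positivity) hrp
  have hScomp : S = ∑ n ∈ B, ENNReal.ofReal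
      (Real.log n / (Real.log (Real.log n)) ^ (1 + ε)) := by
    rw [hSdef]
    rw [tsum_eq_sum (s := B) ?_]
    · apply Finset.sum_congr rfl
      intro n hn
      rw [if_pos (hΩB n hn)]
      have hbn : b n = 1 := by simp [hb, hn]
      rw [hbn]
      norm_num
    · intro n hn
      by_cases hΩ : n.primeFactorsList.length = 2
      · rw [if_pos hΩ]
        have hbn : b n = 0 := by simp [hb, hn]
        rw [hbn]
        simp
      · rw [if_neg hΩ]
  have hBcard : B.card = d := by
    rw [hB]
    rw [Finset.card_image_of_injOn fun q _ q' _ h => Nat.eq_of_mul_eq_mul_left hPpos h]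
  have hS : S ≤ (d : ℝ≥0∞) * ENNReal.ofReal σ := by
    rw [hScomp]
    calc ∑ n ∈ B, ENNReal.ofReal (Real.log n / (Real.log (Real.log n)) ^ (1 + ε))
        ≤ ∑ _n ∈ B, ENNReal.ofReal σ :=
          Finset.sum_le_sum fun n hn => ENNReal.ofReal_le_ofReal (hterm n hn)
      _ = (d : ℝ≥0∞) * ENNReal.ofReal σ := by
          rw [Finset.sum_const, hBcard, nsmul_eq_mul]
  have hSne : S ≠ ⊤ :=
    ne_top_of_le_ne_top (ENNReal.mul_ne_top (ENNReal.natCast_ne_top d)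
      ENNReal.ofReal_ne_top) hS
  have hH : hNorm2 w a ≤ (d.choose j : ℝ≥0∞) * ENNReal.ofReal (((1+δ)^j)⁻¹) := by
    have hHcomp : hNorm2 w a = ∑ _m ∈ A, ENNReal.ofReal (((1+δ)^j)⁻¹) := by
      unfold hNorm2
      rw [tsum_eq_sum (s := A) ?_]
      · apply Finset.sum_congr rfl
        intro m hm
        obtain ⟨T, hT, rfl⟩ := Finset.mem_image.mp hm
        obtain ⟨hTsub, hTcard⟩ := Finset.mem_powersetCard.mp hT
        have hTp : ∀ p ∈ T, Nat.Prime p := fun p hp => hQp p (hTsub hp)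
        have hpos : 0 < ∏ q ∈ T, q := prodQ_pos hTp
        rw [if_pos (show 1 ≤ ∏ q ∈ T, q from hpos)]
        have haa : a (∏ q ∈ T, q) = 1 := by simp [ha, hm]
        rw [haa, hwprod T hTp, hTcard]
        norm_num
      · intro m hm
        by_cases h1 : 1 ≤ m
        · rw [if_pos h1]
          have haa : a m = 0 := by simp [ha, hm]
          rw [haa]
          simp
        · rw [if_neg h1]
    rw [hHcomp, Finset.sum_const, nsmul_eq_mul]
    apply mul_le_mul_left
    have hcardA : A.card ≤ d.choose j := by
      calc A.card ≤ (Finset.powersetCard j Q).card := Finset.card_image_le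
      _ = d.choose j := by rw [Finset.card_powersetCard]
    exact_mod_cast hcardA
  have hL : (d.choose (j+1) : ℝ≥0∞) * ENNReal.ofReal κ ≤ volterraSumLHS w b a := by
    set A' : Finset ℕ := (Finset.powersetCard (j+1) Q).image (fun T => P * ∏ q ∈ T, q)
      with hA'
    have hA'card : A'.card = d.choose (j+1) := by
      rw [hA', Finset.card_image_of_injOn, Finset.card_powersetCard]
      intro T hT T' hT' hh
      simp only [Finset.mem_coe, Finset.mem_powersetCard] at hT hT'
      exact prod_inj_of_primes (fun p hp => hQp p (hT.1 hp)) (fun p hp => hQp p (hT'.1 hp))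
        (Nat.eq_of_mul_eq_mul_left hPpos hh)
    have hLterm : ∀ n ∈ A', ENNReal.ofReal κ ≤ (if 2 ≤ n then
        ENNReal.ofReal
          (‖∑ k ∈ n.divisors.filter (fun k => 2 ≤ k),
              (Real.log k : ℂ) * b k * a (n / k)‖ ^ 2 / (w n * Real.log n ^ 2))
        else 0) := by
      intro n hn
      obtain ⟨T, hTmem, rfl⟩ := Finset.mem_image.mp hn
      obtain ⟨hTsub, hTcard⟩ := Finset.mem_powersetCard.mp hTmem
      have hTp : ∀ p ∈ T, Nat.Prime p := fun p hp => hQp p (hTsub hp)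
      have hmpos : 0 < ∏ q ∈ T, q := prodQ_pos hTp
      have hmN : (∏ q ∈ T, q) ≤ N :=
        Nat.le_of_dvd hNpos (Finset.prod_dvd_prod_of_subset _ _ _ hTsub)
      have hmP : (∏ q ∈ T, q) < P := lt_of_le_of_lt hmN hNP
      have hn2 : 2 ≤ P * ∏ q ∈ T, q := le_trans hP2 (Nat.le_mul_of_pos_right P hmpos)
      have hnpos : 0 < P * ∏ q ∈ T, q := by positivity
      have hnposR : (0:ℝ) < ((P * ∏ q ∈ T, q : ℕ) : ℝ) := by exact_mod_cast hnpos
      rw [if_pos hn2]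
      apply ENNReal.ofReal_le_ofReal
      have hPnotT : P ∉ T := fun hmem => lt_irrefl P (hPQ P (hTsub hmem))
      -- compute the inner sum
      have hinner : ∑ k ∈ (P * ∏ q ∈ T, q).divisors.filter (fun k => 2 ≤ k),
          (Real.log k : ℂ) * b k * a ((P * ∏ q ∈ T, q) / k)
          = ((∑ q ∈ T, Real.log ((P*q : ℕ) : ℝ) : ℝ) : ℂ) := by
        have hinj2 : ∀ x ∈ T, ∀ y ∈ T, P * x = P * y → x = y :=
          fun x _ y _ hh => Nat.eq_of_mul_eq_mul_left hPpos hh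
        have himg : T.image (fun q => P*q) ⊆
            (P * ∏ q ∈ T, q).divisors.filter (fun k => 2 ≤ k) := by
          intro k hk
          obtain ⟨q, hqT, rfl⟩ := Finset.mem_image.mp hk
          refine Finset.mem_filter.mpr ⟨Nat.mem_divisors.mpr
            ⟨mul_dvd_mul_left P (Finset.dvd_prod_of_mem _ hqT), by positivity⟩,
            le_trans hP2 (Nat.le_mul_of_pos_right P (hTp q hqT).pos)⟩
        have hvan : ∀ k ∈ (P * ∏ q ∈ T, q).divisors.filter (fun k => 2 ≤ k),
            k ∉ T.image (fun q => P*q) →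
            (Real.log k : ℂ) * b k * a ((P * ∏ q ∈ T, q) / k) = 0 := by
          intro k hk hkimg
          rcases Finset.mem_filter.mp hk with ⟨hkdvd, hk2⟩
          by_cases hkB : k ∈ B
          · obtain ⟨q', hq', rfl⟩ := Finset.mem_image.mp hkB
            exfalso
            apply hkimg
            have hdq : q' ∣ ∏ q ∈ T, q := by
              have hdd := (Nat.mem_divisors.mp hkdvd).1
              exact (Nat.mul_dvd_mul_iff_left hPpos).mp hdd
            exact Finset.mem_image_of_mem _
              (mem_of_prime_dvd_prodQ (hQp q' hq') hTp hdq)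
          · have hbk : b k = 0 := by simp [hb, hkB]
            rw [hbk]
            ring
        rw [← Finset.sum_subset himg hvan]
        rw [Finset.sum_image hinj2]
        have hterms : ∀ q ∈ T, (Real.log ((P*q : ℕ) : ℝ) : ℂ) * b (P*q) *
            a ((P * ∏ r ∈ T, r) / (P*q)) = ((Real.log ((P*q:ℕ) : ℝ) : ℝ) : ℂ) := by
          intro q hqT
          have hbk : b (P*q) = 1 := by
            have : P*q ∈ B := Finset.mem_image_of_mem _ (hTsub hqT)
            simp [hb, this]
          have hdivv : (P * ∏ r ∈ T, r) / (P*q) = ∏ r ∈ T.erase q, r := by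
            have hm2 : P * ∏ r ∈ T, r = (P*q) * ∏ r ∈ T.erase q, r := by
              rw [← Finset.mul_prod_erase T _ hqT]
              ring
            rw [hm2, Nat.mul_div_cancel_left _ (Nat.mul_pos hPpos (hTp q hqT).pos)]
          have hak : a ((P * ∏ r ∈ T, r) / (P*q)) = 1 := by
            rw [hdivv]
            have hmemA : (∏ r ∈ T.erase q, r) ∈ A := by
              apply Finset.mem_image_of_mem
              apply Finset.mem_powersetCard.mpr
              refine ⟨le_trans (Finset.erase_subset _ _) hTsub, ?_⟩
              rw [Finset.card_erase_of_mem hqT, hTcard]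
              omega
            simp [ha, hmemA]
          rw [hbk, hak, mul_one, mul_one]
        rw [Finset.sum_congr rfl hterms]
        norm_cast
      have hlogP : 0 < Real.log P := Real.log_pos (by exact_mod_cast hPp.one_lt)
      have hsum_lb : ((j:ℝ)+1) * Real.log P ≤ ∑ q ∈ T, Real.log ((P*q:ℕ):ℝ) := by
        have h1 : ∀ q ∈ T, Real.log P ≤ Real.log ((P*q:ℕ):ℝ) := by
          intro q hqT
          apply Real.log_le_log (by exact_mod_cast hPpos)
          exact_mod_cast Nat.le_mul_of_pos_right P (hTp q hqT).pos
        calc ((j:ℝ)+1) * Real.log P = T.card • Real.log P := by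
              rw [hTcard, nsmul_eq_mul]
              push_cast
              ring
        _ ≤ _ := Finset.card_nsmul_le_sum T _ _ h1
      have hnormval : ‖((∑ q ∈ T, Real.log ((P*q:ℕ):ℝ) : ℝ) : ℂ)‖
          = ∑ q ∈ T, Real.log ((P*q:ℕ):ℝ) := by
        rw [Complex.norm_real, Real.norm_eq_abs, abs_of_nonneg]
        exact Finset.sum_nonneg fun q hqT =>
          Real.log_nonneg (by exact_mod_cast Nat.mul_pos hPpos (hTp q hqT).pos)
      have hwn : w (P * ∏ q ∈ T, q) = (1+δ)^(j+2) := by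
        have heq : P * ∏ q ∈ T, q = ∏ q ∈ insert P T, q := by
          rw [Finset.prod_insert hPnotT]
        rw [heq, hwprod _ (fun r hr => (Finset.mem_insert.mp hr).elim
            (fun hh => hh ▸ hPp) (fun hh => hTp r hh)),
          Finset.card_insert_of_notMem hPnotT, hTcard]
      have hlogn_pos : 0 < Real.log ((P * ∏ q ∈ T, q : ℕ):ℝ) :=
        Real.log_pos (by exact_mod_cast lt_of_lt_of_le one_lt_two hn2)
      have hlogn_ub : Real.log ((P * ∏ q ∈ T, q : ℕ):ℝ) ≤ 2 * Real.log P := by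
        have h1 : ((P * ∏ q ∈ T, q:ℕ):ℝ) ≤ ((P:ℝ))^2 := by
          have h2 : P * ∏ q ∈ T, q ≤ P*P := Nat.mul_le_mul_left P hmP.le
          calc ((P * ∏ q ∈ T, q:ℕ):ℝ) ≤ ((P*P:ℕ):ℝ) := by exact_mod_cast h2
          _ = (P:ℝ)^2 := by push_cast; ring
        calc Real.log ((P * ∏ q ∈ T, q:ℕ):ℝ) ≤ Real.log ((P:ℝ)^2) :=
            Real.log_le_log hnposR h1
        _ = 2*Real.log P := by simp [Real.log_pow]
      rw [hinner, hnormval, hwn]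
      have hSnn : (0:ℝ) ≤ ∑ q ∈ T, Real.log ((P*q:ℕ):ℝ) :=
        le_trans (by positivity) hsum_lb
      have key1 : (((j:ℝ)+1) * Real.log P)^2 ≤ (∑ q ∈ T, Real.log ((P*q:ℕ):ℝ))^2 :=
        pow_le_pow_left₀ (by positivity) hsum_lb 2
      have key2 : (1+δ)^(j+2) * Real.log ((P * ∏ q ∈ T, q:ℕ):ℝ)^2
          ≤ (1+δ)^(j+2) * (2*Real.log P)^2 := by
        have hsq : Real.log ((P * ∏ q ∈ T, q:ℕ):ℝ)^2 ≤ (2*Real.log P)^2 := by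
          nlinarith [hlogn_ub, hlogn_pos.le]
        exact mul_le_mul_of_nonneg_left hsq (by positivity)
      calc κ = (((j:ℝ)+1) * Real.log P)^2 / ((1+δ)^(j+2) * (2*Real.log P)^2) := by
            rw [hκdef]
            field_simp
            ring
      _ ≤ (∑ q ∈ T, Real.log ((P*q:ℕ):ℝ))^2 /
            ((1+δ)^(j+2) * Real.log ((P * ∏ q ∈ T, q:ℕ):ℝ)^2) :=
          div_le_div₀ (by positivity) key1 (by positivity) key2
    calc (d.choose (j+1) : ℝ≥0∞) * ENNReal.ofReal κ
        = ∑ _n ∈ A', ENNReal.ofReal κ := by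
          rw [Finset.sum_const, hA'card, nsmul_eq_mul]
      _ ≤ ∑ n ∈ A', (if 2 ≤ n then
            ENNReal.ofReal
              (‖∑ k ∈ n.divisors.filter (fun k => 2 ≤ k),
                  (Real.log k : ℂ) * b k * a (n / k)‖ ^ 2 / (w n * Real.log n ^ 2))
            else 0) := Finset.sum_le_sum hLterm
      _ ≤ volterraSumLHS w b a := ENNReal.sum_le_tsum A'
  have hfin : ((d * d.choose j : ℕ) : ℝ) * (C^2 * (σ * ((1+δ)^j)⁻¹))
      < ((d.choose (j+1) : ℕ) : ℝ) * κ := by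
    have hjle : j ≤ d := by omega
    have hd1 : (1:ℝ) ≤ (d:ℝ) := by exact_mod_cast (by omega : 1 ≤ d)
    -- bound on σ
    have hX : M ≤ (Real.log d / 2)^ε := by
      have h1 : M^(ε⁻¹) ≤ Real.log d / 2 := by
        rw [hRdef] at hdR
        linarith
      calc M = (M^(ε⁻¹))^ε := (Real.rpow_inv_rpow hM0.le hε.ne').symm
      _ ≤ (Real.log d / 2)^ε := Real.rpow_le_rpow (by positivity) h1 hε.le
    have hθub : θ ≤ 2*(d:ℝ)*Real.log d := by
      have hper : ∀ q ∈ Q, Real.log q ≤ 2 * Real.log d := by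
        intro q hq
        have h1 : ((q:ℕ):ℝ) ≤ ((d:ℝ))^2 := by
          have := hQsq q hq
          calc ((q:ℕ):ℝ) ≤ ((d^2 : ℕ):ℝ) := by exact_mod_cast this
          _ = (d:ℝ)^2 := by push_cast; ring
        calc Real.log q ≤ Real.log ((d:ℝ)^2) :=
            Real.log_le_log (by exact_mod_cast (hQp q hq).pos) h1
        _ = 2*Real.log d := by simp [Real.log_pow]
      calc θ ≤ ∑ _q ∈ Q, 2*Real.log d := Finset.sum_le_sum hper
      _ = (d:ℝ)*(2*Real.log d) := by
          rw [Finset.sum_const, ← hd, nsmul_eq_mul]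
      _ = 2*(d:ℝ)*Real.log d := by ring
    have hnum5 : Real.log 2 + 2*θ ≤ 5*(d:ℝ)*Real.log d := by
      have hlog2d : Real.log 2 ≤ Real.log d :=
        Real.log_le_log (by norm_num) (by exact_mod_cast (by omega : 2 ≤ d))
      have h9 : Real.log d ≤ (d:ℝ)*Real.log d := le_mul_of_one_le_left hlogd.le hd1
      linarith only [hlog2d, hθub, h9]
    have hden_eq : (Real.log d / 2)^(1+ε) = (Real.log d / 2) * (Real.log d / 2)^ε := by
      rw [Real.rpow_add hbase, Real.rpow_one]
    have h5 : σ ≤ (5*(d:ℝ)*Real.log d) / ((Real.log d / 2) * M) := by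
      rw [hσdef, hden_eq]
      apply div_le_div₀ (by positivity) hnum5 (by positivity)
      exact mul_le_mul_of_nonneg_left hX (le_of_lt hbase)
    have h6 : (5*(d:ℝ)*Real.log d) / ((Real.log d / 2) * M) = 10*(d:ℝ)/M := by
      field_simp
      ring
    have h7 : 10*(d:ℝ)/M ≤ 10*(d:ℝ)/(320*C^2*(1+δ)^2) :=
      div_le_div_of_nonneg_left (by positivity) (by positivity) hMge
    have h8 : 10*(d:ℝ)/(320*C^2*(1+δ)^2) = (d:ℝ)/(32*C^2*(1+δ)^2) := by
      rw [div_eq_div_iff (by positivity) (by positivity)]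
      ring
    have hσub : σ ≤ (d:ℝ) / (32*C^2*(1+δ)^2) := by
      rw [← h8]
      exact le_trans h5 (h6 ▸ h7)
    -- combinatorial identity
    have hch : ((d.choose (j+1)):ℝ) * ((j:ℝ)+1) = ((d.choose j):ℝ) * ((d:ℝ) - (j:ℝ)) := by
      have h := Nat.choose_succ_right_eq d j
      have h2 : ((d.choose (j+1) * (j+1) : ℕ) : ℝ) = ((d.choose j * (d - j) : ℕ) : ℝ) := by
        exact_mod_cast congrArg (fun x : ℕ => (x:ℝ)) h
      push_cast [Nat.cast_sub hjle] at h2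
      linarith
    have hchj0 : (0:ℝ) < (d.choose j : ℝ) := by
      exact_mod_cast Nat.choose_pos hjle
    have h2j : 2*j ≤ d ∧ d ≤ 2*j+1 := by omega
    have hdj1 : (d:ℝ)/2 ≤ ((d:ℝ) - (j:ℝ)) := by
      have := h2j.1
      have : ((2*j:ℕ):ℝ) ≤ (d:ℝ) := by exact_mod_cast this
      push_cast at this
      linarith
    have hdj2 : (d:ℝ)/2 ≤ ((j:ℝ)+1) := by
      have := h2j.2
      have : (d:ℝ) ≤ ((2*j+1:ℕ):ℝ) := by exact_mod_cast this
      push_cast at this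
      linarith
    -- assembling
    have hD : (0:ℝ) < (1+δ)^(j+2) := by positivity
    have e1 : ((d.choose (j+1)):ℝ) * κ
        = (((d.choose j):ℝ)/((1+δ)^(j+2))) * (((d:ℝ)-(j:ℝ))*((j:ℝ)+1)/4) := by
      rw [hκdef]
      have hnum_eq : ((d.choose (j+1)):ℝ)*(((j:ℝ)+1)^2)
          = ((d.choose j):ℝ)*(((d:ℝ)-(j:ℝ))*((j:ℝ)+1)) := by
        rw [pow_two, ← mul_assoc, hch]
        ring
      calc ((d.choose (j+1)):ℝ) * (((j:ℝ)+1)^2/(4*(1+δ)^(j+2)))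
          = ((d.choose (j+1)):ℝ)*(((j:ℝ)+1)^2)/(4*(1+δ)^(j+2)) := by rw [← mul_div_assoc]
        _ = ((d.choose j):ℝ)*(((d:ℝ)-(j:ℝ))*((j:ℝ)+1))/(4*(1+δ)^(j+2)) := by rw [hnum_eq]
        _ = (((d.choose j):ℝ)/((1+δ)^(j+2))) * (((d:ℝ)-(j:ℝ))*((j:ℝ)+1)/4) := by
            rw [div_mul_div_comm, mul_comm ((1+δ)^(j+2)) 4]
    have e2 : ((d * d.choose j : ℕ) : ℝ) * (C^2 * (σ * ((1+δ)^j)⁻¹))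
        ≤ (((d.choose j):ℝ)/((1+δ)^(j+2))) * ((d:ℝ)^2/32) := by
      have hcast : ((d * d.choose j : ℕ) : ℝ) = (d:ℝ) * ((d.choose j):ℝ) := by push_cast; ring
      rw [hcast]
      have e2a : (d:ℝ) * ((d.choose j):ℝ) * (C^2 * (σ * ((1+δ)^j)⁻¹))
          ≤ (d:ℝ) * ((d.choose j):ℝ) * (C^2 * (((d:ℝ) / (32*C^2*(1+δ)^2)) * ((1+δ)^j)⁻¹)) := by
        gcongr
      have e2b : (d:ℝ) * ((d.choose j):ℝ) * (C^2 * (((d:ℝ) / (32*C^2*(1+δ)^2)) * ((1+δ)^j)⁻¹))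
          = (((d.choose j):ℝ)/((1+δ)^(j+2))) * ((d:ℝ)^2/32) := by
        rw [pow_add]
        field_simp
      linarith
    have e3 : (((d.choose j):ℝ)/((1+δ)^(j+2))) * ((d:ℝ)^2/32)
        < (((d.choose j):ℝ)/((1+δ)^(j+2))) * (((d:ℝ)-(j:ℝ))*((j:ℝ)+1)/4) := by
      apply mul_lt_mul_of_pos_left _ (by positivity)
      have h10 : (d:ℝ)/2*((d:ℝ)/2) ≤ ((d:ℝ)-(j:ℝ))*((j:ℝ)+1) :=
        mul_le_mul hdj1 hdj2 (by positivity) (by linarith only [hdj1, hdpos])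
      have h11 : (d:ℝ)/2*((d:ℝ)/2) = (d:ℝ)^2/4 := by ring
      have h12 : (0:ℝ) < (d:ℝ)^2 := by positivity
      linarith only [h10, h11, h12]
    rw [e1]
    calc ((d * d.choose j : ℕ) : ℝ) * (C^2 * (σ * ((1+δ)^j)⁻¹))
        ≤ (((d.choose j):ℝ)/((1+δ)^(j+2))) * ((d:ℝ)^2/32) := e2
      _ < _ := e3
  refine ⟨b, hsupp, hSne, a, hafin, ?_⟩
  calc ENNReal.ofReal (C ^ 2) * S * hNorm2 w a
      ≤ ENNReal.ofReal (C ^ 2) * ((d : ℝ≥0∞) * ENNReal.ofReal σ) *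
          ((d.choose j : ℝ≥0∞) * ENNReal.ofReal (((1+δ)^j)⁻¹)) :=
        mul_le_mul' (mul_le_mul' le_rfl hS) hH
    _ = ((d * d.choose j : ℕ) : ℝ≥0∞) * ENNReal.ofReal (C^2 * (σ * ((1+δ)^j)⁻¹)) := by
        rw [ENNReal.ofReal_mul (by positivity), ENNReal.ofReal_mul hσ0]
        push_cast
        ring
    _ < ((d.choose (j+1) : ℕ) : ℝ≥0∞) * ENNReal.ofReal κ := by
        rw [← ENNReal.ofReal_natCast (d * d.choose j), ← ENNReal.ofReal_natCast (d.choose (j+1)),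
          ← ENNReal.ofReal_mul (by positivity), ← ENNReal.ofReal_mul (by positivity)]
        rw [ENNReal.ofReal_lt_ofReal_iff]
        · exact hfin
        · have hch : 0 < (d.choose (j+1) : ℝ) := by exact_mod_cast Nat.choose_pos hjd
          positivity
    _ ≤ volterraSumLHS w b a := hL
end

section
/- Let δ, η > 0 with 2η > 1 and δ + η > 1. Then the triple sum over primes S := ∑_{p₁,p₂,p₃ prime, p_j ≥ 3} [p₁ p₂ p₃ (log log p₁)^{2δ} (log log p₂)²]^{−1} · (log p₃)² · [(log log p₃)^{2η} (log(p₁ p₂ p₃))²]^{−1} is finite. -/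
open Real Finset

lemma one_lt_log_three : (1:ℝ) < Real.log 3 := by
  rw [Real.lt_log_iff_exp_lt (by norm_num : (0:ℝ) < 3)]
  calc Real.exp 1 < 2.7182818286 := Real.exp_one_lt_d9
    _ < 3 := by norm_num

lemma L0 {s : ℝ} (hs : 1 < s) : Summable (fun k : ℕ => ((k : ℝ) ⊔ 1) ^ (-s)) := by
  rw [← summable_nat_add_iff 1]
  have h : Summable (fun k : ℕ => ((k : ℝ) + 1) ^ (-s)) := by
    have := Real.summable_nat_rpow (p := -s)
    rw [← summable_nat_add_iff 1] at this
    · exact this.mpr (by linarith) |>.congr (fun n => by push_cast; ring_nf)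
  refine h.congr fun n => ?_
  have : ((n + 1 : ℕ) : ℝ) ⊔ 1 = (n : ℝ) + 1 := by
    rw [sup_eq_left.mpr]; · push_cast; ring
    push_cast; linarith [Nat.cast_nonneg (α := ℝ) n]
  rw [this]

lemma L1 {s : ℝ} (hs : 1 < s) :
    Summable (fun j : ℕ => (((j : ℝ) + 4) * Real.log ((j : ℝ) + 4) ^ s)⁻¹) := by
  set f : ℕ → ℝ := fun j => (((j : ℝ) + 4) * Real.log ((j : ℝ) + 4) ^ s)⁻¹ with hf
  have hpos : ∀ n : ℕ, (0:ℝ) < ((n : ℝ) + 4) * Real.log ((n : ℝ) + 4) ^ s := by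
    intro n
    have hn0 : (0:ℝ) ≤ (n:ℝ) := Nat.cast_nonneg n
    have h4 : (4:ℝ) ≤ (n : ℝ) + 4 := by linarith
    have hlog : 0 < Real.log ((n : ℝ) + 4) :=
      Real.log_pos (by linarith)
    positivity
  have hnonneg : ∀ n, 0 ≤ f n := fun n => le_of_lt (by rw [hf]; exact inv_pos.mpr (hpos n))
  have hmono : ∀ ⦃m n : ℕ⦄, 0 < m → m ≤ n → f n ≤ f m := by
    intro m n _ hmn
    rw [hf]
    apply inv_anti₀ (hpos m)
    have hc : (m : ℝ) + 4 ≤ (n : ℝ) + 4 := by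
      have := Nat.cast_le (α := ℝ).mpr hmn; linarith
    have hl : Real.log ((m : ℝ) + 4) ≤ Real.log ((n : ℝ) + 4) :=
      Real.log_le_log (by positivity) hc
    have hl0 : 0 ≤ Real.log ((m : ℝ) + 4) :=
      le_of_lt (Real.log_pos (by
        have : (0:ℝ) ≤ (m:ℝ) := Nat.cast_nonneg m
        linarith))
    exact mul_le_mul hc (Real.rpow_le_rpow hl0 hl (by linarith)) (by positivity) (by positivity)
  rw [← summable_condensed_iff_of_nonneg hnonneg hmono]
  -- bound condensed terms
  have key : ∀ k : ℕ, (2:ℝ)^k * f (2^k) ≤ (Real.log 2)⁻¹ ^ s * ((k:ℝ) ⊔ 1) ^ (-s) := by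
    intro k
    have h2k : ((2^k : ℕ) : ℝ) = (2:ℝ)^k := by push_cast; ring
    have hden := hpos (2^k)
    rw [hf]
    simp only [h2k]
    have hlb : (((k:ℝ) ⊔ 1) * Real.log 2) ≤ Real.log ((2:ℝ)^k + 4) := by
      rcases le_or_gt (k:ℝ) 1 with h | h
      · rw [sup_eq_right.mpr h, one_mul]
        have h2 : (0:ℝ) < 2^k := by positivity
        exact Real.log_le_log (by norm_num) (by linarith)
      · rw [sup_eq_left.mpr h.le]
        have h2 : (0:ℝ) < (2:ℝ)^k := by positivity
        have e1 : (k:ℝ) * Real.log 2 = Real.log ((2:ℝ)^k) := by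
          rw [← Real.log_pow]
        rw [e1]
        exact Real.log_le_log h2 (by linarith)
    have hlog2 : (0:ℝ) < Real.log 2 := Real.log_pos (by norm_num)
    have hk1 : (0:ℝ) < (k:ℝ) ⊔ 1 := lt_sup_of_lt_right one_pos
    have hlbpos : (0:ℝ) < ((k:ℝ) ⊔ 1) * Real.log 2 := by positivity
    have hrp : (((k:ℝ) ⊔ 1) * Real.log 2) ^ s ≤ Real.log (((2:ℝ)^k :ℝ)+ 4) ^ s :=
      Real.rpow_le_rpow hlbpos.le hlb (by linarith)
    have h1 : (2:ℝ)^k * (((2:ℝ)^k + 4) * Real.log ((2:ℝ)^k + 4) ^ s)⁻¹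
        ≤ (Real.log ((2:ℝ)^k + 4) ^ s)⁻¹ := by
      rw [mul_inv]
      have hx : (0:ℝ) < (2:ℝ)^k := by positivity
      have hy : (0:ℝ) < Real.log ((2:ℝ)^k + 4) := Real.log_pos (by nlinarith)
      rw [← mul_assoc]
      have : (2:ℝ)^k * ((2:ℝ)^k + 4)⁻¹ ≤ 1 := by
        rw [mul_inv_le_iff₀ (by linarith), one_mul]; linarith
      nth_rewrite 2 [← one_mul (Real.log ((2:ℝ)^k + 4) ^ s)⁻¹]
      exact mul_le_mul_of_nonneg_right this (by positivity)
    refine h1.trans ?_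
    calc (Real.log ((2:ℝ)^k + 4) ^ s)⁻¹ ≤ ((((k:ℝ) ⊔ 1) * Real.log 2) ^ s)⁻¹ := by
          exact inv_anti₀ (by positivity) hrp
      _ = (Real.log 2)⁻¹ ^ s * ((k:ℝ) ⊔ 1) ^ (-s) := by
          rw [Real.mul_rpow hk1.le hlog2.le, Real.rpow_neg hk1.le, Real.inv_rpow hlog2.le, mul_inv]
          ring
  refine Summable.of_nonneg_of_le (fun k => ?_) key (((L0 hs).mul_left _))
  have := hnonneg (2^k); positivity

lemma L2 {s : ℝ} (hs : 1 < s) :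
    Summable (fun n : ℕ => (((n : ℝ) + 16) * Real.log ((n : ℝ) + 16) *
      Real.log (Real.log ((n : ℝ) + 16)) ^ s)⁻¹) := by
  have hs0 : (0:ℝ) ≤ s := by linarith
  have hlog16 : (1:ℝ) < Real.log 16 := by
    rw [show (16:ℝ) = 2^(4:ℕ) by norm_num, Real.log_pow]
    have := Real.log_two_gt_d9
    push_cast; nlinarith
  have hfacts : ∀ x : ℝ, 16 ≤ x → 1 < Real.log x ∧ 0 < Real.log (Real.log x) := by
    intro x hx
    have h1 : (1:ℝ) < Real.log x := lt_of_lt_of_le hlog16 (Real.log_le_log (by norm_num) hx)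
    exact ⟨h1, Real.log_pos h1⟩
  have hpos : ∀ n : ℕ, (0:ℝ) < ((n : ℝ) + 16) * Real.log ((n : ℝ) + 16) *
      Real.log (Real.log ((n : ℝ) + 16)) ^ s := by
    intro n
    have hn0 : (0:ℝ) ≤ (n:ℝ) := Nat.cast_nonneg n
    obtain ⟨h1, h2⟩ := hfacts ((n:ℝ) + 16) (by linarith)
    have := Real.rpow_pos_of_pos h2 s
    positivity
  set f : ℕ → ℝ := fun n => (((n : ℝ) + 16) * Real.log ((n : ℝ) + 16) *
      Real.log (Real.log ((n : ℝ) + 16)) ^ s)⁻¹ with hf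
  have hnonneg : ∀ n, 0 ≤ f n := fun n => le_of_lt (inv_pos.mpr (hpos n))
  have hmono : ∀ ⦃m n : ℕ⦄, 0 < m → m ≤ n → f n ≤ f m := by
    intro m n _ hmn
    have hm0 : (0:ℝ) ≤ (m:ℝ) := Nat.cast_nonneg m
    obtain ⟨hm1, hm2⟩ := hfacts ((m:ℝ) + 16) (by linarith)
    obtain ⟨hn1, hn2⟩ := hfacts ((n:ℝ) + 16) (by linarith [Nat.cast_nonneg (α := ℝ) n])
    apply inv_anti₀ (hpos m)
    have hc : (m : ℝ) + 16 ≤ (n : ℝ) + 16 := by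
      have := Nat.cast_le (α := ℝ).mpr hmn; linarith
    have hl : Real.log ((m : ℝ) + 16) ≤ Real.log ((n : ℝ) + 16) :=
      Real.log_le_log (by linarith) hc
    have hll : Real.log (Real.log ((m : ℝ) + 16)) ≤ Real.log (Real.log ((n : ℝ) + 16)) :=
      Real.log_le_log (by linarith) hl
    have h1 : ((m:ℝ)+16) * Real.log ((m:ℝ)+16) ≤ ((n:ℝ)+16) * Real.log ((n:ℝ)+16) :=
      mul_le_mul hc hl (by linarith) (by linarith)
    exact mul_le_mul h1 (Real.rpow_le_rpow hm2.le hll hs0) (by positivity) (by positivity)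
  rw [← summable_condensed_iff_of_nonneg hnonneg hmono]
  rw [← summable_nat_add_iff 4]
  have hlog2 : (0:ℝ) < Real.log 2 := Real.log_pos (by norm_num)
  have key : ∀ j : ℕ, (2:ℝ)^(j+4) * f (2^(j+4)) ≤
      ((2:ℝ) ^ s / Real.log 2) * ((((j:ℝ) + 4) * Real.log ((j : ℝ) + 4) ^ s)⁻¹) := by
    intro j
    set u : ℝ := (j:ℝ) + 4 with hu
    have hj0 : (0:ℝ) ≤ (j:ℝ) := Nat.cast_nonneg j
    have hu4 : (4:ℝ) ≤ u := by rw [hu]; linarith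
    have hx : ((2^(j+4) : ℕ) : ℝ) = (2:ℝ)^(j+4) := by push_cast; ring
    have h2x : (16:ℝ) ≤ (2:ℝ)^(j+4) := by
      calc (16:ℝ) = 2^(4:ℕ) := by norm_num
        _ ≤ (2:ℝ)^(j+4) := by
            apply pow_le_pow_right₀ (by norm_num); omega
    have hxpos : (0:ℝ) < (2:ℝ)^(j+4) := by positivity
    obtain ⟨hL1, hLL1⟩ := hfacts ((2:ℝ)^(j+4) + 16) (by linarith)
    -- log(2^(j+4)+16) ≥ u * log 2
    have hL : u * Real.log 2 ≤ Real.log ((2:ℝ)^(j+4) + 16) := by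
      have e1 : u * Real.log 2 = Real.log ((2:ℝ)^(j+4)) := by
        rw [Real.log_pow, hu]; push_cast; ring
      rw [e1]
      exact Real.log_le_log hxpos (by linarith)
    have hupos : (0:ℝ) < u := by linarith
    have hulog2 : (0:ℝ) < u * Real.log 2 := by positivity
    -- log(u * log 2) ≥ log u / 2
    have hsqrt : Real.sqrt u ≤ u * Real.log 2 := by
      have h1 : Real.sqrt u ≤ u / 2 := by
        rw [show u / 2 = Real.sqrt ((u/2)^2) by rw [Real.sqrt_sq (by linarith)]]
        apply Real.sqrt_le_sqrt; nlinarith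
      have h2 : u / 2 ≤ u * Real.log 2 := by nlinarith [Real.log_two_gt_d9]
      exact le_trans h1 h2
    have hLL : Real.log u / 2 ≤ Real.log (Real.log ((2:ℝ)^(j+4) + 16)) := by
      have e : Real.log (Real.sqrt u) = Real.log u / 2 := Real.log_sqrt hupos.le
      have t1 : Real.log (Real.sqrt u) ≤ Real.log (u * Real.log 2) :=
        Real.log_le_log (Real.sqrt_pos.mpr hupos) hsqrt
      have t2 : Real.log (u * Real.log 2) ≤ Real.log (Real.log ((2:ℝ)^(j+4) + 16)) :=
        Real.log_le_log hulog2 hL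
      linarith
    have hlogu : (0:ℝ) < Real.log u := Real.log_pos (by linarith)
    -- assemble
    rw [hf]
    simp only [hx]
    have hden : ((2:ℝ)^(j+4) + 16) * Real.log ((2:ℝ)^(j+4) + 16) *
        Real.log (Real.log ((2:ℝ)^(j+4) + 16)) ^ s ≥
        (2:ℝ)^(j+4) * (u * Real.log 2) * (Real.log u / 2) ^ s := by
      apply mul_le_mul
      · apply mul_le_mul (by linarith) hL (by positivity) (by linarith)
      · exact Real.rpow_le_rpow (by positivity) hLL hs0
      · positivity
      · positivity
    have hdpos : (0:ℝ) < (2:ℝ)^(j+4) * (u * Real.log 2) * (Real.log u / 2) ^ s := by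
      have := Real.rpow_pos_of_pos (show (0:ℝ) < Real.log u / 2 by linarith) s
      positivity
    calc (2:ℝ)^(j+4) * (((2:ℝ)^(j+4) + 16) * Real.log ((2:ℝ)^(j+4) + 16) *
        Real.log (Real.log ((2:ℝ)^(j+4) + 16)) ^ s)⁻¹
        ≤ (2:ℝ)^(j+4) * ((2:ℝ)^(j+4) * (u * Real.log 2) * (Real.log u / 2) ^ s)⁻¹ := by
          apply mul_le_mul_of_nonneg_left (inv_anti₀ hdpos hden) (by positivity)
      _ = ((2:ℝ) ^ s / Real.log 2) * ((u * Real.log u ^ s)⁻¹) := by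
          rw [Real.div_rpow hlogu.le (by norm_num)]
          have h2s : (0:ℝ) < (2:ℝ) ^ s := Real.rpow_pos_of_pos (by norm_num) s
          have hl : (0:ℝ) < Real.log u ^ s := Real.rpow_pos_of_pos hlogu s
          field_simp
  apply Summable.of_nonneg_of_le _ key
  · exact ((L1 hs).mul_left _)
  · intro j
    have := hnonneg (2^(j+4))
    have : (0:ℝ) ≤ f (2^(j+4)) := this
    positivity

lemma nat_nth_prime_pow_le (n : ℕ) (hn : 1 ≤ n) :
    ((n+1)/2 + 2) ^ (n - (n+1)/2 + 1) ≤ 4 ^ (Nat.nth Nat.Prime n) := by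
  set m : ℕ := (n+1)/2 with hm
  have hmn : m ≤ n := by omega
  have hinf := Nat.infinite_setOf_prime
  have hmem : ∀ i ∈ Finset.Icc m n, m + 2 ≤ Nat.nth Nat.Prime i := by
    intro i hi
    rw [Finset.mem_Icc] at hi
    calc m + 2 ≤ Nat.nth Nat.Prime m := Nat.add_two_le_nth_prime m
      _ ≤ Nat.nth Nat.Prime i := Nat.nth_monotone hinf hi.1
  have h1 : (m + 2) ^ (n - m + 1) ≤ ∏ i ∈ Finset.Icc m n, Nat.nth Nat.Prime i := by
    have := Finset.pow_card_le_prod (Finset.Icc m n) (fun i => Nat.nth Nat.Prime i) (m+2) hmem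
    rwa [Nat.card_Icc, Nat.succ_sub hmn] at this
  have h2 : ∏ i ∈ Finset.Icc m n, Nat.nth Nat.Prime i ≤ primorial (Nat.nth Nat.Prime n) := by
    have himg : ∏ p ∈ (Finset.Icc m n).image (Nat.nth Nat.Prime), p
        = ∏ i ∈ Finset.Icc m n, Nat.nth Nat.Prime i :=
      Finset.prod_image (fun i _ j _ hij => (Nat.nth_strictMono hinf).injective hij)
    rw [← himg]
    apply Finset.prod_le_prod_of_subset_of_one_le'
    · intro p hp
      rw [Finset.mem_image] at hp
      obtain ⟨i, hi, rfl⟩ := hp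
      rw [Finset.mem_Icc] at hi
      rw [Finset.mem_filter, Finset.mem_range]
      exact ⟨Nat.lt_succ_of_le (Nat.nth_monotone hinf hi.2), Nat.prime_nth_prime i⟩
    · intro p hp _
      rw [Finset.mem_filter] at hp
      exact hp.2.one_lt.le
  calc (m + 2) ^ (n - m + 1) ≤ primorial (Nat.nth Nat.Prime n) := le_trans h1 h2
    _ ≤ 4 ^ (Nat.nth Nat.Prime n) := primorial_le_4_pow _

lemma nth_prime_real_lb (n : ℕ) (hn : 16 ≤ n) :
    (n:ℝ) * Real.log n ≤ 8 * Real.log 2 * (Nat.nth Nat.Prime n : ℝ) := by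
  have hn1 : 1 ≤ n := by omega
  set m : ℕ := (n+1)/2 with hm
  set c : ℕ := n - m + 1 with hc
  set p : ℕ := Nat.nth Nat.Prime n with hp
  have hnat := nat_nth_prime_pow_le n hn1
  have hcast : (((m+2 : ℕ)):ℝ) ^ c ≤ ((4:ℕ):ℝ) ^ p := by
    rw [← Nat.cast_pow, ← Nat.cast_pow]
    exact_mod_cast hnat
  have hm2pos : (0:ℝ) < ((m+2:ℕ):ℝ) := by positivity
  have hlog : (c:ℝ) * Real.log ((m+2:ℕ):ℝ) ≤ (p:ℝ) * Real.log 4 := by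
    have := Real.log_le_log (by positivity) hcast
    rwa [Real.log_pow, Real.log_pow, Nat.cast_ofNat] at this
  -- numeric relations
  have hmn : m ≤ n := by omega
  have hcr : ((n:ℝ))/2 ≤ (c:ℝ) := by
    have h1 : (m:ℝ) ≤ ((n:ℝ)+1)/2 := by
      have : (2*m : ℕ) ≤ n+1 := by omega
      have := Nat.cast_le (α := ℝ).mpr this
      push_cast at this; linarith
    have h2 : (c:ℝ) = (n:ℝ) - (m:ℝ) + 1 := by
      rw [hc]; push_cast [Nat.cast_sub hmn]; ring
    linarith
  have hmr : ((n:ℝ))/2 ≤ ((m+2:ℕ):ℝ) := by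
    have : (n : ℕ) ≤ 2*m + 1 := by omega
    have := Nat.cast_le (α := ℝ).mpr this
    push_cast at this ⊢; linarith
  have hn4 : (4:ℝ) ≤ (n:ℝ) := by
    have := Nat.cast_le (α := ℝ).mpr hn; norm_num at this ⊢; linarith
  have hlogn2 : Real.log ((n:ℝ)/2) ≤ Real.log ((m+2:ℕ):ℝ) :=
    Real.log_le_log (by linarith) hmr
  have hlognhalf : Real.log (n:ℝ) / 2 ≤ Real.log ((n:ℝ)/2) := by
    rw [Real.log_div (by linarith) (by norm_num)]
    have h2 : Real.log 2 ≤ Real.log (n:ℝ) / 2 := by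
      have : Real.log 4 ≤ Real.log (n:ℝ) := Real.log_le_log (by norm_num) hn4
      rw [show (4:ℝ) = 2^(2:ℕ) by norm_num, Real.log_pow] at this
      push_cast at this; linarith
    linarith
  have hlognpos : (0:ℝ) < Real.log (n:ℝ) := Real.log_pos (by linarith)
  have key : (n:ℝ)/2 * (Real.log (n:ℝ) / 2) ≤ (p:ℝ) * Real.log 4 := by
    calc (n:ℝ)/2 * (Real.log (n:ℝ) / 2) ≤ (c:ℝ) * Real.log ((m+2:ℕ):ℝ) := by
          apply mul_le_mul hcr (le_trans hlognhalf hlogn2) (by linarith) (by positivity)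
      _ ≤ (p:ℝ) * Real.log 4 := hlog
  have hlog4 : Real.log 4 = 2 * Real.log 2 := by
    rw [show (4:ℝ) = 2^(2:ℕ) by norm_num, Real.log_pow]; push_cast; ring
  rw [hlog4] at key
  linarith

-- The key prime-sum lemma

lemma primeSummable {s : ℝ} (hs : 1 < s) :
    Summable (fun n : ℕ => if n.Prime ∧ 3 ≤ n then
      ((n:ℝ) * Real.log (Real.log n) ^ s)⁻¹ else 0) := by
  have hs0 : (0:ℝ) ≤ s := by linarith
  have hinf := Nat.infinite_setOf_prime
  set G : ℕ → ℝ := fun n => if 3 ≤ n then ((n:ℝ) * Real.log (Real.log n) ^ s)⁻¹ else 0 with hG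
  have heq : (fun n : ℕ => if n.Prime ∧ 3 ≤ n then
      ((n:ℝ) * Real.log (Real.log n) ^ s)⁻¹ else 0) = Set.indicator {n | n.Prime} G := by
    funext n
    rw [Set.indicator_apply, hG]
    by_cases h1 : n.Prime <;> by_cases h2 : 3 ≤ n <;>
      simp [h1, h2, Set.mem_setOf_eq]
  rw [heq, ← summable_subtype_iff_indicator]
  set e : ℕ ≃ {n : ℕ // n ∈ {m : ℕ | Nat.Prime m}} :=
    { toFun := fun k => ⟨Nat.nth Nat.Prime k, Nat.nth_mem_of_infinite hinf k⟩
      invFun := fun x => Nat.count Nat.Prime x.val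
      left_inv := fun k => Nat.count_nth_of_infinite hinf k
      right_inv := fun x => Subtype.ext (Nat.nth_count x.property) } with he
  rw [← e.summable_iff]
  have hcomp : ((G ∘ (↑)) ∘ e) = fun k => G (Nat.nth Nat.Prime k) := rfl
  rw [hcomp]
  rw [← summable_nat_add_iff 16]
  have hlog16 : (1:ℝ) < Real.log 16 := by
    rw [show (16:ℝ) = 2^(4:ℕ) by norm_num, Real.log_pow]
    have := Real.log_two_gt_d9
    push_cast; nlinarith
  have hlog2 : (0:ℝ) < Real.log 2 := Real.log_pos (by norm_num)
  have key : ∀ k : ℕ, G (Nat.nth Nat.Prime (k + 16)) ≤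
      (8 * Real.log 2) * ((((k:ℝ) + 16) * Real.log ((k : ℝ) + 16) *
        Real.log (Real.log ((k : ℝ) + 16)) ^ s)⁻¹) := by
    intro k
    set n : ℕ := k + 16 with hn
    set p : ℕ := Nat.nth Nat.Prime n with hp
    have hn16 : 16 ≤ n := by omega
    have hpn : n + 2 ≤ p := Nat.add_two_le_nth_prime n
    have h3p : 3 ≤ p := by omega
    have hnr : ((n:ℕ):ℝ) = (k:ℝ) + 16 := by push_cast [hn]; ring
    have hnr16 : (16:ℝ) ≤ ((n:ℕ):ℝ) := by rw [hnr]; have : (0:ℝ) ≤ (k:ℝ) := Nat.cast_nonneg k; linarith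
    have hpr : ((n:ℕ):ℝ) ≤ (p:ℝ) := by
      have := Nat.cast_le (α := ℝ).mpr hpn; push_cast at this ⊢; linarith
    have hlogn : (1:ℝ) < Real.log (n:ℝ) :=
      lt_of_lt_of_le hlog16 (Real.log_le_log (by norm_num) hnr16)
    have hlogp : (1:ℝ) < Real.log (p:ℝ) :=
      lt_of_lt_of_le hlogn (Real.log_le_log (by linarith) hpr)
    have hlln : (0:ℝ) < Real.log (Real.log (n:ℝ)) := Real.log_pos hlogn
    have hllp : Real.log (Real.log (n:ℝ)) ≤ Real.log (Real.log (p:ℝ)) :=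
      Real.log_le_log (by linarith) (Real.log_le_log (by linarith) hpr)
    have hGp : G p = ((p:ℝ) * Real.log (Real.log (p:ℝ)) ^ s)⁻¹ := by
      rw [hG]; simp [h3p]
    rw [hGp]
    have hlb := nth_prime_real_lb n hn16
    have hrp : Real.log (Real.log (n:ℝ)) ^ s ≤ Real.log (Real.log (p:ℝ)) ^ s :=
      Real.rpow_le_rpow hlln.le hllp hs0
    have hrppos : (0:ℝ) < Real.log (Real.log (n:ℝ)) ^ s := Real.rpow_pos_of_pos hlln s
    have hden : ((n:ℝ) * Real.log (n:ℝ) * Real.log (Real.log (n:ℝ)) ^ s) / (8 * Real.log 2)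
        ≤ (p:ℝ) * Real.log (Real.log (p:ℝ)) ^ s := by
      rw [div_le_iff₀ (by positivity)]
      calc (n:ℝ) * Real.log (n:ℝ) * Real.log (Real.log (n:ℝ)) ^ s
          ≤ (8 * Real.log 2 * (p:ℝ)) * Real.log (Real.log (p:ℝ)) ^ s := by
            apply mul_le_mul hlb hrp hrppos.le (by positivity)
        _ = (p:ℝ) * Real.log (Real.log (p:ℝ)) ^ s * (8 * Real.log 2) := by ring
    have hdpos : (0:ℝ) < ((n:ℝ) * Real.log (n:ℝ) * Real.log (Real.log (n:ℝ)) ^ s) / (8 * Real.log 2) := by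
      positivity
    calc ((p:ℝ) * Real.log (Real.log (p:ℝ)) ^ s)⁻¹
        ≤ (((n:ℝ) * Real.log (n:ℝ) * Real.log (Real.log (n:ℝ)) ^ s) / (8 * Real.log 2))⁻¹ :=
          inv_anti₀ hdpos hden
      _ = (8 * Real.log 2) * (((n:ℝ) * Real.log (n:ℝ) * Real.log (Real.log (n:ℝ)) ^ s)⁻¹) := by
          rw [inv_div]; ring
      _ = (8 * Real.log 2) * ((((k:ℝ) + 16) * Real.log ((k : ℝ) + 16) *
          Real.log (Real.log ((k : ℝ) + 16)) ^ s)⁻¹) := by rw [hnr]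
  apply Summable.of_nonneg_of_le _ key (((L2 hs).mul_left _))
  intro k
  rw [hG]
  by_cases h : 3 ≤ Nat.nth Nat.Prime (k + 16)
  · simp only [h, if_true]
    set p := Nat.nth Nat.Prime (k+16)
    have hp3 : (3:ℝ) ≤ (p:ℝ) := by exact_mod_cast h
    have h1 : (1:ℝ) < Real.log (p:ℝ) := by
      have h2 : Real.log 3 ≤ Real.log (p:ℝ) := Real.log_le_log (by norm_num) hp3
      linarith [one_lt_log_three]
    have : (0:ℝ) < Real.log (Real.log (p:ℝ)) := Real.log_pos h1
    have := Real.rpow_pos_of_pos this s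
    positivity
  · simp [h]

lemma key_ratio (t : ℝ) (ht0 : 0 ≤ t) (ht2 : t ≤ 2) {a c : ℝ}
    (ha : 3 ≤ a) (hc : 3 ≤ c) {Lb : ℝ} (hLb : 0 < Lb) :
    Real.log c ^ 2 / (Real.log a + Lb + Real.log c) ^ 2 ≤
      (1 + (Real.log (Real.log 3))⁻¹) ^ t *
        (Real.log (Real.log c) ^ t / Real.log (Real.log a) ^ t) := by
  have hll3 : (0:ℝ) < Real.log (Real.log 3) := Real.log_pos one_lt_log_three
  set K : ℝ := 1 + (Real.log (Real.log 3))⁻¹ with hK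
  have hi3 : (0:ℝ) < (Real.log (Real.log 3))⁻¹ := inv_pos.mpr hll3
  have hK1 : (1:ℝ) ≤ K := by rw [hK]; linarith
  have hCK : (1:ℝ) ≤ K ^ t := by
    calc (1:ℝ) = K ^ (0:ℝ) := (Real.rpow_zero K).symm
      _ ≤ K ^ t := Real.rpow_le_rpow_of_exponent_le hK1 ht0
  set La := Real.log a with hLa
  set Lc := Real.log c with hLc
  have hLa1 : 1 < La := lt_of_lt_of_le one_lt_log_three (Real.log_le_log (by norm_num) ha)
  have hLc1 : 1 < Lc := lt_of_lt_of_le one_lt_log_three (Real.log_le_log (by norm_num) hc)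
  set lla := Real.log La with hlla
  set llc := Real.log Lc with hllc
  have hlla0 : 0 < lla := Real.log_pos hLa1
  have hllc0 : 0 < llc := Real.log_pos hLc1
  have hL : 0 < La + Lb + Lc := by linarith
  have hlart : 0 < lla ^ t := Real.rpow_pos_of_pos hlla0 t
  have hlcrt : 0 < llc ^ t := Real.rpow_pos_of_pos hllc0 t
  rcases le_or_gt La Lc with hcase | hcase
  · -- La ≤ Lc : LHS ≤ 1 ≤ RHS
    have h1 : Lc ^ 2 / (La + Lb + Lc) ^ 2 ≤ 1 := by
      rw [div_le_one (by positivity)]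
      nlinarith
    have hle : lla ≤ llc := Real.log_le_log (by linarith) hcase
    have h2 : (1:ℝ) ≤ llc ^ t / lla ^ t := by
      rw [le_div_iff₀ hlart, one_mul]
      exact Real.rpow_le_rpow hlla0.le hle ht0
    nlinarith
  · -- Lc < La
    have hll3c : Real.log (Real.log 3) ≤ llc := by
      rw [hllc, hLc]
      exact Real.log_le_log (Real.log_pos (by norm_num)) (Real.log_le_log (by norm_num) hc)
    set r : ℝ := La / Lc with hr
    have hLc0 : (0:ℝ) < Lc := by linarith
    have hLa0 : (0:ℝ) < La := by linarith
    have hr1 : (1:ℝ) ≤ r := by rw [hr, le_div_iff₀ hLc0]; linarith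
    -- lla ≤ llc * r * K
    have hA : lla ≤ llc * r * K := by
      have hlog_ratio : lla - llc = Real.log r := by
        rw [hlla, hllc, hr, Real.log_div (by linarith) (by linarith)]
      have h1 : Real.log r ≤ r - 1 := Real.log_le_sub_one_of_pos (by positivity)
      have hlci3 : (1:ℝ) ≤ llc * (Real.log (Real.log 3))⁻¹ := by
        rw [← div_eq_mul_inv, le_div_iff₀ hll3]; linarith
      rw [hK]
      nlinarith [mul_nonneg (sub_nonneg.mpr hr1) (sub_nonneg.mpr hlci3),
        mul_pos hllc0 hi3, mul_nonneg (sub_nonneg.mpr hr1) hllc0.le]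
    -- (Lc/La)/K ≤ llc/lla
    have hq : (Lc / La) / K ≤ llc / lla := by
      rw [div_div, div_le_div_iff₀ (by positivity) hlla0]
      calc Lc * lla ≤ Lc * (llc * r * K) := by
            apply mul_le_mul_of_nonneg_left hA hLc0.le
        _ = llc * (La * K) := by
            rw [hr]; field_simp
    have hq0 : (0:ℝ) < (Lc / La) / K := by positivity
    have h2 : ((Lc / La) / K) ^ t ≤ (llc / lla) ^ t :=
      Real.rpow_le_rpow hq0.le hq ht0
    have hsplit : ((Lc / La) / K) ^ t = (Lc / La) ^ t / K ^ t :=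
      Real.div_rpow (by positivity) (by linarith : (0:ℝ) ≤ K) t
    have hLcLa1 : Lc / La ≤ 1 := by rw [div_le_one hLa0]; linarith
    have h3 : (Lc / La) ^ (2:ℝ) ≤ (Lc / La) ^ t :=
      Real.rpow_le_rpow_of_exponent_ge (by positivity) hLcLa1 ht2
    have h4 : (Lc / La) ^ (2:ℝ) = Lc ^ 2 / La ^ 2 := by
      rw [show (2:ℝ) = ((2:ℕ):ℝ) by norm_num, Real.rpow_natCast, div_pow]
    have hdivsplit : (llc / lla) ^ t = llc ^ t / lla ^ t :=
      Real.div_rpow hllc0.le hlla0.le t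
    -- combine: Lc^2/La^2 ≤ K^t * (llc^t/lla^t)
    have hB : Lc ^ 2 / La ^ 2 ≤ K ^ t * (llc ^ t / lla ^ t) := by
      rw [← hdivsplit]
      calc Lc ^ 2 / La ^ 2 = (Lc / La) ^ (2:ℝ) := h4.symm
        _ ≤ (Lc / La) ^ t := h3
        _ = K ^ t * ((Lc / La) ^ t / K ^ t) := by
            field_simp
        _ ≤ K ^ t * ((llc / lla) ^ t) := by
            apply mul_le_mul_of_nonneg_left _ (by positivity)
            rw [← hsplit]; exact h2
    -- and Lc^2/L^2 ≤ Lc^2/La^2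
    have hfin : Lc ^ 2 / (La + Lb + Lc) ^ 2 ≤ Lc ^ 2 / La ^ 2 := by
      apply div_le_div_of_nonneg_left (by positivity) (by positivity)
      have hstep : La ≤ La + Lb + Lc := by linarith
      exact pow_le_pow_left₀ hLa0.le hstep 2
    exact hfin.trans hB

lemma pointwise_bound (δ η t : ℝ) (hδ : 0 < δ) (hη : 0 < η) (ht0 : 0 ≤ t) (ht2 : t ≤ 2)
    {a b c : ℝ} (ha : 3 ≤ a) (hb : 3 ≤ b) (hc : 3 ≤ c) :
    (a * b * c * Real.log (Real.log a) ^ (2 * δ) * Real.log (Real.log b) ^ 2)⁻¹ *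
      (Real.log c ^ 2 / (Real.log (Real.log c) ^ (2 * η) * Real.log (a * b * c) ^ 2))
    ≤ (1 + (Real.log (Real.log 3))⁻¹) ^ t *
      ((a * Real.log (Real.log a) ^ (2 * δ + t))⁻¹ *
       ((b * Real.log (Real.log b) ^ (2:ℝ))⁻¹ *
        (c * Real.log (Real.log c) ^ (2 * η - t))⁻¹)) := by
  have hll3 : (0:ℝ) < Real.log (Real.log 3) := Real.log_pos one_lt_log_three
  set K : ℝ := 1 + (Real.log (Real.log 3))⁻¹ with hK
  have hKpos : (0:ℝ) < K := by rw [hK]; have := inv_pos.mpr hll3; linarith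
  have hKt : (0:ℝ) < K ^ t := Real.rpow_pos_of_pos hKpos t
  have ha0 : (0:ℝ) < a := by linarith
  have hb0 : (0:ℝ) < b := by linarith
  have hc0 : (0:ℝ) < c := by linarith
  have hLa1 : 1 < Real.log a := lt_of_lt_of_le one_lt_log_three (Real.log_le_log (by norm_num) ha)
  have hLb1 : 1 < Real.log b := lt_of_lt_of_le one_lt_log_three (Real.log_le_log (by norm_num) hb)
  have hLc1 : 1 < Real.log c := lt_of_lt_of_le one_lt_log_three (Real.log_le_log (by norm_num) hc)
  have hlla : 0 < Real.log (Real.log a) := Real.log_pos hLa1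
  have hllb : 0 < Real.log (Real.log b) := Real.log_pos hLb1
  have hllc : 0 < Real.log (Real.log c) := Real.log_pos hLc1
  have hlogabc : Real.log (a * b * c) = Real.log a + Real.log b + Real.log c := by
    rw [Real.log_mul (by positivity) (by positivity), Real.log_mul (by positivity) (by positivity)]
  rw [hlogabc]
  -- abbreviations
  set La := Real.log a
  set Lb := Real.log b
  set Lc := Real.log c
  set A := Real.log La ^ (2 * δ) with hA
  set A' := Real.log La ^ t with hA'
  set B := Real.log Lb ^ 2 with hB
  set C3 := Real.log Lc ^ (2 * η - t) with hC3
  set C' := Real.log Lc ^ t with hC'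
  have hApos : 0 < A := Real.rpow_pos_of_pos hlla _
  have hA'pos : 0 < A' := Real.rpow_pos_of_pos hlla _
  have hBpos : 0 < B := by positivity
  have hC3pos : 0 < C3 := Real.rpow_pos_of_pos hllc _
  have hC'pos : 0 < C' := Real.rpow_pos_of_pos hllc _
  have hAA' : Real.log La ^ (2 * δ + t) = A * A' := by
    rw [hA, hA', Real.rpow_add hlla]
  have hCC' : Real.log Lc ^ (2 * η) = C3 * C' := by
    rw [hC3, hC', ← Real.rpow_add hllc]; ring_nf
  have hB2 : Real.log Lb ^ (2:ℝ) = B := by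
    rw [hB, show (2:ℝ) = ((2:ℕ):ℝ) by norm_num, Real.rpow_natCast]
  rw [hAA', hCC', hB2]
  have hLpos : (0:ℝ) < La + Lb + Lc := by linarith
  have key := key_ratio t ht0 ht2 ha hc (show (0:ℝ) < Lb by linarith)
  have e1 : (a * b * c * A * B)⁻¹ * (Lc ^ 2 / (C3 * C' * (La + Lb + Lc) ^ 2))
      = (Lc ^ 2 / (La + Lb + Lc) ^ 2) * (a * b * c * A * B * C3 * C')⁻¹ := by
    field_simp
  rw [e1]
  have step : (Lc ^ 2 / (La + Lb + Lc) ^ 2) * (a * b * c * A * B * C3 * C')⁻¹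
      ≤ (K ^ t * (C' / A')) * (a * b * c * A * B * C3 * C')⁻¹ := by
    apply mul_le_mul_of_nonneg_right key (by positivity)
  refine step.trans_eq ?_
  field_simp

lemma primeTerm_nonneg (s : ℝ) (n : ℕ) :
    0 ≤ (if n.Prime ∧ 3 ≤ n then ((n:ℝ) * Real.log (Real.log n) ^ s)⁻¹ else 0) := by
  split_ifs with h
  · obtain ⟨-, h3⟩ := h
    have h3r : (3:ℝ) ≤ (n:ℝ) := by exact_mod_cast h3
    have hL : 1 < Real.log (n:ℝ) :=
      lt_of_lt_of_le one_lt_log_three (Real.log_le_log (by norm_num) h3r)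
    have hll : 0 < Real.log (Real.log (n:ℝ)) := Real.log_pos hL
    have := Real.rpow_pos_of_pos hll s
    positivity
  · exact le_refl _

set_option maxHeartbeats 1000000 in
/-- For `2η > 1` and `δ + η > 1`, the triple sum over odd primes
`S = ∑_{p₁,p₂,p₃≥3} [p₁p₂p₃ (log log p₁)^{2δ}(log log p₂)²]⁻¹
      (log p₃)² [(log log p₃)^{2η}(log(p₁p₂p₃))²]⁻¹` converges. -/
theorem statement17 (δ η : ℝ) (hδ : 0 < δ) (hη : 0 < η)
    (h1 : 1 < 2 * η) (h2 : 1 < δ + η) :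
    Summable (fun q : ℕ × ℕ × ℕ =>
      if q.1.Prime ∧ q.2.1.Prime ∧ q.2.2.Prime ∧ 3 ≤ q.1 ∧ 3 ≤ q.2.1 ∧ 3 ≤ q.2.2 then
        ((q.1 : ℝ) * q.2.1 * q.2.2 * (Real.log (Real.log q.1)) ^ (2 * δ) *
            (Real.log (Real.log q.2.1)) ^ 2)⁻¹ *
          ((Real.log q.2.2) ^ 2 /
            ((Real.log (Real.log q.2.2)) ^ (2 * η) *
              (Real.log ((q.1 : ℝ) * q.2.1 * q.2.2)) ^ 2))
      else 0) := by
  classical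
  -- choice of the transfer exponent t
  set l : ℝ := max 0 (1 - 2 * δ) with hl
  set u : ℝ := min (2 * η - 1) 2 with hu
  have hlu : l < u := by
    rw [hl, hu]
    apply max_lt
    · apply lt_min <;> linarith
    · apply lt_min <;> linarith
  have hl0 : (0:ℝ) ≤ l := le_max_left _ _
  have hl1 : 1 - 2 * δ ≤ l := le_max_right _ _
  have hu1 : u ≤ 2 * η - 1 := min_le_left _ _
  have hu2 : u ≤ 2 := min_le_right _ _
  set t : ℝ := (l + u) / 2 with ht
  have ht0 : 0 ≤ t := by rw [ht]; linarith
  have ht2 : t ≤ 2 := by rw [ht]; linarith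
  have hs1 : 1 < 2 * δ + t := by rw [ht]; linarith
  have hs3 : 1 < 2 * η - t := by rw [ht]; linarith
  -- the three one-variable functions
  set F1 : ℕ → ℝ := fun n => if n.Prime ∧ 3 ≤ n then
    ((n:ℝ) * Real.log (Real.log n) ^ (2 * δ + t))⁻¹ else 0 with hF1
  set F2 : ℕ → ℝ := fun n => if n.Prime ∧ 3 ≤ n then
    ((n:ℝ) * Real.log (Real.log n) ^ (2:ℝ))⁻¹ else 0 with hF2
  set F3 : ℕ → ℝ := fun n => if n.Prime ∧ 3 ≤ n then
    ((n:ℝ) * Real.log (Real.log n) ^ (2 * η - t))⁻¹ else 0 with hF3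
  have hS1 : Summable F1 := primeSummable hs1
  have hS2 : Summable F2 := primeSummable one_lt_two
  have hS3 : Summable F3 := primeSummable hs3
  have hN1 : 0 ≤ F1 := fun n => primeTerm_nonneg _ n
  have hN2 : 0 ≤ F2 := fun n => primeTerm_nonneg _ n
  have hN3 : 0 ≤ F3 := fun n => primeTerm_nonneg _ n
  have hS23 : Summable (fun x : ℕ × ℕ => F2 x.1 * F3 x.2) :=
    hS2.mul_of_nonneg hS3 hN2 hN3
  have hN23 : 0 ≤ (fun x : ℕ × ℕ => F2 x.1 * F3 x.2) :=
    fun x => mul_nonneg (hN2 x.1) (hN3 x.2)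
  have hSprod : Summable (fun q : ℕ × (ℕ × ℕ) => F1 q.1 * (F2 q.2.1 * F3 q.2.2)) :=
    hS1.mul_of_nonneg hS23 hN1 hN23
  set K : ℝ := 1 + (Real.log (Real.log 3))⁻¹ with hK
  have hKC : Summable (fun q : ℕ × ℕ × ℕ => K ^ t * (F1 q.1 * (F2 q.2.1 * F3 q.2.2))) :=
    hSprod.mul_left _
  apply Summable.of_nonneg_of_le _ _ hKC
  · -- nonnegativity
    intro q
    split_ifs with h
    · obtain ⟨hp1, hp2, hp3, h31, h32, h33⟩ := h
      have ha : (3:ℝ) ≤ (q.1:ℝ) := by exact_mod_cast h31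
      have hb : (3:ℝ) ≤ (q.2.1:ℝ) := by exact_mod_cast h32
      have hc : (3:ℝ) ≤ (q.2.2:ℝ) := by exact_mod_cast h33
      have hLa : 1 < Real.log (q.1:ℝ) :=
        lt_of_lt_of_le one_lt_log_three (Real.log_le_log (by norm_num) ha)
      have hLc : 1 < Real.log (q.2.2:ℝ) :=
        lt_of_lt_of_le one_lt_log_three (Real.log_le_log (by norm_num) hc)
      have hlla : 0 < Real.log (Real.log (q.1:ℝ)) := Real.log_pos hLa
      have hllc : 0 < Real.log (Real.log (q.2.2:ℝ)) := Real.log_pos hLc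
      have h1' := Real.rpow_pos_of_pos hlla (2 * δ)
      have h2' := Real.rpow_pos_of_pos hllc (2 * η)
      positivity
    · exact le_refl _
  · -- pointwise bound
    intro q
    by_cases h : q.1.Prime ∧ q.2.1.Prime ∧ q.2.2.Prime ∧ 3 ≤ q.1 ∧ 3 ≤ q.2.1 ∧ 3 ≤ q.2.2
    · obtain ⟨hp1, hp2, hp3, h31, h32, h33⟩ := h
      have ha : (3:ℝ) ≤ (q.1:ℝ) := by exact_mod_cast h31
      have hb : (3:ℝ) ≤ (q.2.1:ℝ) := by exact_mod_cast h32
      have hc : (3:ℝ) ≤ (q.2.2:ℝ) := by exact_mod_cast h33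
      have e1 : F1 q.1 = ((q.1:ℝ) * Real.log (Real.log q.1) ^ (2 * δ + t))⁻¹ := by
        rw [hF1]; exact if_pos ⟨hp1, h31⟩
      have e2 : F2 q.2.1 = ((q.2.1:ℝ) * Real.log (Real.log q.2.1) ^ (2:ℝ))⁻¹ := by
        rw [hF2]; exact if_pos ⟨hp2, h32⟩
      have e3 : F3 q.2.2 = ((q.2.2:ℝ) * Real.log (Real.log q.2.2) ^ (2 * η - t))⁻¹ := by
        rw [hF3]; exact if_pos ⟨hp3, h33⟩
      rw [if_pos ⟨hp1, hp2, hp3, h31, h32, h33⟩, e1, e2, e3]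
      exact pointwise_bound δ η t hδ hη ht0 ht2 ha hb hc
    · rw [if_neg h]
      have := mul_nonneg (hN1 q.1) (mul_nonneg (hN2 q.2.1) (hN3 q.2.2))
      have hKpos : (0:ℝ) < K := by
        rw [hK]
        have hll3 : (0:ℝ) < Real.log (Real.log 3) := Real.log_pos one_lt_log_three
        have := inv_pos.mpr hll3; linarith
      have := Real.rpow_pos_of_pos hKpos t
      positivity
end
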